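/- arXiv:1809.10907 — 5 statements merged into one kernel-verified Lean document; each statement's English description precedes it below -/
import Mathlib

section
/- For every integer n ≥ 1 one has σ₇(n) = σ₃(n) + 120·∑_{m=1}^{n−1} σ₃(m)·σ₃(n−m). -/
/-- `σ_k(n) = ∑_{d | n, d > 0} d^k`, the sum of the `k`-th powers of the positive divisors. -/
def sigmaFn (k n : ℕ) : ℕ := ∑ d ∈ n.divisors, d ^ k

namespace SigmaSevenAux

open Finset

/-- The set of quadruples `(a,b,x,y)` of positive integers with `a*x + b*y = n`. -/
def S (n : ℕ) : Finset (ℕ × ℕ × ℕ × ℕ) :=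
  ((Icc 1 n ×ˢ Icc 1 n ×ˢ Icc 1 n ×ˢ Icc 1 n)).filter
    fun q => q.1 * q.2.2.1 + q.2.1 * q.2.2.2 = n

lemma mem_S {n : ℕ} {q : ℕ × ℕ × ℕ × ℕ} :
    q ∈ S n ↔ 0 < q.1 ∧ 0 < q.2.1 ∧ 0 < q.2.2.1 ∧ 0 < q.2.2.2 ∧
      q.1 * q.2.2.1 + q.2.1 * q.2.2.2 = n := by
  obtain ⟨a, b, x, y⟩ := q
  simp only [S, mem_filter, mem_product, mem_Icc]
  constructor
  · rintro ⟨⟨⟨ha, -⟩, ⟨hb, -⟩, ⟨hx, -⟩, ⟨hy, -⟩⟩, he⟩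
    exact ⟨ha, hb, hx, hy, he⟩
  · rintro ⟨ha, hb, hx, hy, he⟩
    have hax : a * x ≤ n := he ▸ Nat.le_add_right _ _
    have hby : b * y ≤ n := he ▸ Nat.le_add_left _ _
    have h1 : a ≤ n := le_trans (Nat.le_mul_of_pos_right a hx) hax
    have h2 : x ≤ n := le_trans (Nat.le_mul_of_pos_left x ha) hax
    have h3 : b ≤ n := le_trans (Nat.le_mul_of_pos_right b hy) hby
    have h4 : y ≤ n := le_trans (Nat.le_mul_of_pos_left y hb) hby
    exact ⟨⟨⟨ha, h1⟩, ⟨hb, h3⟩, ⟨hx, h2⟩, ⟨hy, h4⟩⟩, he⟩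

/-- swap `(a,b,x,y) ↦ (b,a,y,x)`. -/
def sw (q : ℕ × ℕ × ℕ × ℕ) : ℕ × ℕ × ℕ × ℕ := (q.2.1, q.1, q.2.2.2, q.2.2.1)

lemma sw_sw (q : ℕ × ℕ × ℕ × ℕ) : sw (sw q) = q := rfl

lemma sw_mem_S {n : ℕ} {q : ℕ × ℕ × ℕ × ℕ} (h : q ∈ S n) : sw q ∈ S n := by
  rw [mem_S] at h ⊢
  obtain ⟨h1, h2, h3, h4, h5⟩ := h
  exact ⟨h2, h1, h4, h3, by rw [add_comm]; exact h5⟩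

/-- Sum over a region is the sum over the swapped region of the swapped function. -/
lemma sum_sw {n : ℕ} (p : ℕ × ℕ × ℕ × ℕ → Prop) [DecidablePred p]
    (f : ℕ × ℕ × ℕ × ℕ → ℤ) :
    ∑ q ∈ (S n).filter p, f q
      = ∑ q ∈ (S n).filter (fun q => p (sw q)), f (sw q) := by
  apply Finset.sum_nbij' (i := sw) (j := sw)
  · intro q hq
    rw [mem_filter] at hq ⊢
    refine ⟨sw_mem_S hq.1, ?_⟩
    show p (sw (sw q))
    rw [sw_sw]; exact hq.2
  · intro q hq
    rw [mem_filter] at hq ⊢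
    exact ⟨sw_mem_S hq.1, hq.2⟩
  · intro q _; exact sw_sw q
  · intro q _; exact sw_sw q
  · intro q _; rfl

/-- Three-way partition of a sum by comparing `u` and `v`. -/
lemma sum_partition {α : Type*} [DecidableEq α] (s : Finset α) (f : α → ℤ) (u v : α → ℕ) :
    ∑ q ∈ s, f q =
      (∑ q ∈ s.filter (fun q => u q < v q), f q)
        + (∑ q ∈ s.filter (fun q => u q = v q), f q)
        + (∑ q ∈ s.filter (fun q => v q < u q), f q) := by
  rw [← Finset.sum_filter_add_sum_filter_not s (fun q => u q < v q) f]
  have h2 := Finset.sum_filter_add_sum_filter_not (s.filter (fun q => ¬ u q < v q))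
    (fun q => u q = v q) f
  rw [Finset.filter_filter, Finset.filter_filter] at h2
  have e1 : s.filter (fun q => ¬ u q < v q ∧ u q = v q) = s.filter (fun q => u q = v q) := by
    apply Finset.filter_congr; intro q _
    constructor
    · rintro ⟨-, h⟩; exact h
    · intro h; omega
  have e2 : s.filter (fun q => ¬ u q < v q ∧ ¬ u q = v q) = s.filter (fun q => v q < u q) := by
    apply Finset.filter_congr; intro q _
    constructor
    · rintro ⟨h1, h2⟩; omega
    · intro h; omega
  rw [e1, e2] at h2
  rw [← h2, add_assoc]

/-- The key Liouville-type bijection: `(a,b,x,y) ↦ (a, a+b, x−y, y)` maps the region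
`x > y` bijectively onto the region `a < b`. -/
lemma sum_phi {n : ℕ} (f : ℕ → ℕ → ℕ → ℕ → ℤ) :
    ∑ q ∈ (S n).filter (fun q => q.2.2.2 < q.2.2.1), f q.1 q.2.1 q.2.2.1 q.2.2.2
      = ∑ q ∈ (S n).filter (fun q => q.1 < q.2.1),
          f q.1 (q.2.1 - q.1) (q.2.2.1 + q.2.2.2) q.2.2.2 := by
  apply Finset.sum_nbij'
    (i := fun q => (q.1, q.1 + q.2.1, q.2.2.1 - q.2.2.2, q.2.2.2))
    (j := fun q => (q.1, q.2.1 - q.1, q.2.2.1 + q.2.2.2, q.2.2.2))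
  · rintro ⟨a, b, x, y⟩ hq
    simp only [mem_filter, mem_S] at hq ⊢
    obtain ⟨⟨ha, hb, hx, hy, he⟩, hlt⟩ := hq
    refine ⟨⟨ha, by omega, by omega, hy, ?_⟩, by omega⟩
    have h2 : a * (x - y) + (a + b) * y = a * ((x - y) + y) + b * y := by ring
    have h3 : x - y + y = x := by omega
    rw [h2, h3]; exact he
  · rintro ⟨a, b, x, y⟩ hq
    simp only [mem_filter, mem_S] at hq ⊢
    obtain ⟨⟨ha, hb, hx, hy, he⟩, hlt⟩ := hq
    refine ⟨⟨ha, by omega, by omega, hy, ?_⟩, by omega⟩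
    have h2 : a * (x + y) + (b - a) * y = a * x + (a + (b - a)) * y := by ring
    have h3 : a + (b - a) = b := by omega
    rw [h2, h3]; exact he
  · rintro ⟨a, b, x, y⟩ hq
    simp only [mem_filter, mem_S] at hq
    obtain ⟨⟨ha, hb, hx, hy, he⟩, hlt⟩ := hq
    simp only [Prod.mk.injEq]
    exact ⟨trivial, by omega, by omega, trivial⟩
  · rintro ⟨a, b, x, y⟩ hq
    simp only [mem_filter, mem_S] at hq
    obtain ⟨⟨ha, hb, hx, hy, he⟩, hlt⟩ := hq
    simp only [Prod.mk.injEq]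
    exact ⟨trivial, by omega, by omega, trivial⟩
  · rintro ⟨a, b, x, y⟩ hq
    simp only [mem_filter, mem_S] at hq
    obtain ⟨⟨ha, hb, hx, hy, he⟩, hlt⟩ := hq
    dsimp only
    rw [show a + b - a = b by omega]
    rw [show x - y + y = x by omega]

/-- Evaluation of the diagonal `x = y`: it is parametrized by a divisor `e` of `n`
(`e = a + b`) together with `a ∈ [1, e)`. -/
lemma sum_diag {n : ℕ} (hn : n ≠ 0) (g : ℕ → ℕ → ℤ) :
    ∑ q ∈ (S n).filter (fun q => q.2.2.1 = q.2.2.2), g q.1 q.2.1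
      = ∑ e ∈ n.divisors, ∑ i ∈ Ico 1 e, g i (e - i) := by
  have hsub : ∀ e ∈ n.divisors, (Ico 1 n.succ).filter (fun i => i < e) = Ico 1 e := by
    intro e he
    rw [Nat.mem_divisors] at he
    have hle : e ≤ n := Nat.le_of_dvd (Nat.pos_of_ne_zero hn) he.1
    ext i
    simp only [mem_filter, mem_Ico]
    omega
  have hstep : ∀ e ∈ n.divisors, ∑ i ∈ Ico 1 e, g i (e - i)
      = ∑ i ∈ (Ico 1 n.succ).filter (fun i => i < e), g i (e - i) := by
    intro e he; rw [hsub e he]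
  rw [Finset.sum_congr rfl hstep]
  have hprod : ∑ e ∈ n.divisors, ∑ i ∈ (Ico 1 n.succ).filter (fun i => i < e), g i (e - i)
      = ∑ p ∈ (n.divisors ×ˢ Ico 1 n.succ).filter (fun p => p.2 < p.1), g p.2 (p.1 - p.2) := by
    rw [Finset.sum_filter, Finset.sum_product]
    apply Finset.sum_congr rfl
    intro e _
    rw [Finset.sum_filter]
  rw [hprod]
  symm
  apply Finset.sum_nbij'
    (i := fun p => (p.2, p.1 - p.2, n / p.1, n / p.1))
    (j := fun q => (q.1 + q.2.1, q.1))
  · rintro ⟨e, i⟩ hp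
    simp only [mem_filter, mem_product, Nat.mem_divisors, mem_Ico, mem_S] at hp ⊢
    obtain ⟨⟨⟨hdvd, -⟩, hi1, -⟩, hlt⟩ := hp
    have hepos : 0 < e := by omega
    have hdpos : 0 < n / e := Nat.div_pos (Nat.le_of_dvd (Nat.pos_of_ne_zero hn) hdvd) hepos
    refine ⟨⟨by omega, by omega, hdpos, hdpos, ?_⟩, trivial⟩
    rw [← add_mul, show i + (e - i) = e by omega, Nat.mul_div_cancel' hdvd]
  · rintro ⟨a, b, x, y⟩ hq
    simp only [mem_filter, mem_S] at hq
    obtain ⟨⟨ha, hb, hx, hy, he⟩, hxy⟩ := hq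
    subst hxy
    have hab : (a + b) * x = n := by rw [add_mul]; exact he
    simp only [mem_filter, mem_product, Nat.mem_divisors, mem_Ico]
    have hax : a ≤ a * x := Nat.le_mul_of_pos_right a hx
    have hbx : 0 < b * x := Nat.mul_pos hb hx
    refine ⟨⟨⟨⟨x, hab.symm⟩, hn⟩, by omega, by omega⟩, by omega⟩
  · rintro ⟨e, i⟩ hp
    simp only [mem_filter, mem_product, Nat.mem_divisors, mem_Ico] at hp
    obtain ⟨⟨-, hi1, -⟩, hlt⟩ := hp
    simp only [Prod.mk.injEq]
    exact ⟨by omega, trivial⟩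
  · rintro ⟨a, b, x, y⟩ hq
    simp only [mem_filter, mem_S] at hq
    obtain ⟨⟨ha, hb, hx, hy, he⟩, hxy⟩ := hq
    subst hxy
    have hab : (a + b) * x = n := by rw [add_mul]; exact he
    have hxval : n / (a + b) = x := by
      rw [← hab]; exact Nat.mul_div_cancel_left x (by omega)
    simp only [Prod.mk.injEq]
    exact ⟨trivial, by omega, hxval, hxval⟩
  · rintro ⟨e, i⟩ hp
    rfl

/-! ### Power sum (Faulhaber) lemmas -/

lemma sum_cube (e : ℕ) : 4 * ∑ i ∈ range e, (i : ℤ) ^ 3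
    = (e : ℤ) ^ 4 - 2 * (e : ℤ) ^ 3 + (e : ℤ) ^ 2 := by
  induction e with
  | zero => simp
  | succ m ih =>
    rw [Finset.sum_range_succ, mul_add, ih]
    push_cast
    ring

lemma sum_four (e : ℕ) : 30 * ∑ i ∈ range e, (i : ℤ) ^ 4
    = 6 * (e : ℤ) ^ 5 - 15 * (e : ℤ) ^ 4 + 10 * (e : ℤ) ^ 3 - (e : ℤ) := by
  induction e with
  | zero => simp
  | succ m ih =>
    rw [Finset.sum_range_succ, mul_add, ih]
    push_cast
    ring

lemma sum_five (e : ℕ) : 12 * ∑ i ∈ range e, (i : ℤ) ^ 5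
    = 2 * (e : ℤ) ^ 6 - 6 * (e : ℤ) ^ 5 + 5 * (e : ℤ) ^ 4 - (e : ℤ) ^ 2 := by
  induction e with
  | zero => simp
  | succ m ih =>
    rw [Finset.sum_range_succ, mul_add, ih]
    push_cast
    ring

/-- The per-divisor Faulhaber evaluation. -/
lemma faulhaber (e : ℕ) :
    60 * ∑ i ∈ Ico 1 e, ((i : ℤ) ^ 3 * ((e - i : ℕ) : ℤ) ^ 3
        + (i : ℤ) ^ 4 * ((e - i : ℕ) : ℤ) ^ 2)
      = (e : ℤ) ^ 7 - (e : ℤ) ^ 3 := by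
  rcases Nat.eq_zero_or_pos e with he | he
  · subst he; simp
  have hIco : ∑ i ∈ range e, ((i : ℤ) ^ 3 * ((e - i : ℕ) : ℤ) ^ 3
        + (i : ℤ) ^ 4 * ((e - i : ℕ) : ℤ) ^ 2)
      = ∑ i ∈ Ico 1 e, ((i : ℤ) ^ 3 * ((e - i : ℕ) : ℤ) ^ 3
        + (i : ℤ) ^ 4 * ((e - i : ℕ) : ℤ) ^ 2) := by
    rw [Finset.range_eq_Ico, Finset.sum_eq_sum_Ico_succ_bot he]
    norm_num
  rw [← hIco]
  have hpt : ∀ i ∈ range e, ((i : ℤ) ^ 3 * ((e - i : ℕ) : ℤ) ^ 3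
        + (i : ℤ) ^ 4 * ((e - i : ℕ) : ℤ) ^ 2)
      = (e : ℤ) ^ 3 * (i : ℤ) ^ 3 - 2 * (e : ℤ) ^ 2 * (i : ℤ) ^ 4 + (e : ℤ) * (i : ℤ) ^ 5 := by
    intro i hi
    rw [mem_range] at hi
    have hcast : ((e - i : ℕ) : ℤ) = (e : ℤ) - i := by
      have : i ≤ e := le_of_lt hi
      omega
    rw [hcast]
    ring
  rw [Finset.sum_congr rfl hpt]
  simp only [Finset.sum_add_distrib, Finset.sum_sub_distrib, ← Finset.mul_sum]
  linear_combination 15 * (e : ℤ) ^ 3 * sum_cube e - 4 * (e : ℤ) ^ 2 * sum_four e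
    + 5 * (e : ℤ) * sum_five e

/-- The convolution sum as a sum over quadruples. -/
lemma sum_conv {n : ℕ} :
    ∑ q ∈ S n, (q.1 : ℤ) ^ 3 * (q.2.1 : ℤ) ^ 3
      = ∑ m ∈ Ico 1 n, (sigmaFn 3 m : ℤ) * (sigmaFn 3 (n - m) : ℤ) := by
  have hsig : ∀ m : ℕ, (sigmaFn 3 m : ℤ) = ∑ p ∈ m.divisorsAntidiagonal, (p.1 : ℤ) ^ 3 := by
    intro m
    rw [sigmaFn]
    push_cast
    rw [Nat.sum_divisorsAntidiagonal (f := fun d _ => (d : ℤ) ^ 3)]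
  have hrhs : ∑ m ∈ Ico 1 n, (sigmaFn 3 m : ℤ) * (sigmaFn 3 (n - m) : ℤ)
      = ∑ p ∈ (Ico 1 n).sigma
          (fun m => m.divisorsAntidiagonal ×ˢ (n - m).divisorsAntidiagonal),
          (p.2.1.1 : ℤ) ^ 3 * (p.2.2.1 : ℤ) ^ 3 := by
    rw [Finset.sum_sigma]
    apply Finset.sum_congr rfl
    intro m _
    rw [hsig m, hsig (n - m), Finset.sum_mul_sum]
    rw [Finset.sum_product]
  rw [hrhs]
  apply Finset.sum_nbij'
    (i := fun q => ⟨q.1 * q.2.2.1, ((q.1, q.2.2.1), (q.2.1, q.2.2.2))⟩)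
    (j := fun p => (p.2.1.1, p.2.2.1, p.2.1.2, p.2.2.2))
  · rintro ⟨a, b, x, y⟩ hq
    simp only [mem_S] at hq
    obtain ⟨ha, hb, hx, hy, he⟩ := hq
    simp only [Finset.mem_sigma, mem_Ico, mem_product, Nat.mem_divisorsAntidiagonal]
    have hax : 0 < a * x := Nat.mul_pos ha hx
    have hby : 0 < b * y := Nat.mul_pos hb hy
    refine ⟨⟨by omega, by omega⟩, ⟨trivial, by omega⟩, ⟨by omega, by omega⟩⟩
  · rintro ⟨m, ⟨⟨a, x⟩, ⟨b, y⟩⟩⟩ hp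
    simp only [Finset.mem_sigma, mem_Ico, mem_product, Nat.mem_divisorsAntidiagonal] at hp
    obtain ⟨⟨hm1, hm2⟩, ⟨hax, hm0⟩, ⟨hby, hnm0⟩⟩ := hp
    simp only [mem_S]
    have ha : 0 < a := by
      rcases Nat.eq_zero_or_pos a with h | h
      · rw [h, zero_mul] at hax; omega
      · exact h
    have hx : 0 < x := by
      rcases Nat.eq_zero_or_pos x with h | h
      · rw [h, mul_zero] at hax; omega
      · exact h
    have hb : 0 < b := by
      rcases Nat.eq_zero_or_pos b with h | h
      · rw [h, zero_mul] at hby; omega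
      · exact h
    have hy : 0 < y := by
      rcases Nat.eq_zero_or_pos y with h | h
      · rw [h, mul_zero] at hby; omega
      · exact h
    exact ⟨ha, hb, hx, hy, by omega⟩
  · rintro ⟨a, b, x, y⟩ _
    rfl
  · rintro ⟨m, ⟨⟨a, x⟩, ⟨b, y⟩⟩⟩ hp
    simp only [Finset.mem_sigma, mem_product, Nat.mem_divisorsAntidiagonal] at hp
    obtain ⟨-, ⟨hax, -⟩, -⟩ := hp
    dsimp only at hax ⊢
    subst hax
    rfl
  · rintro ⟨a, b, x, y⟩ _
    rfl

end SigmaSevenAux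

open Finset SigmaSevenAux in
/-- For every integer `n ≥ 1`, `σ₇(n) = σ₃(n) + 120·∑_{m=1}^{n−1} σ₃(m)·σ₃(n−m)`. -/
theorem sigma_seven_eq (n : ℕ) (hn : 1 ≤ n) :
    sigmaFn 7 n = sigmaFn 3 n + 120 * ∑ m ∈ Finset.Ico 1 n, sigmaFn 3 m * sigmaFn 3 (n - m) := by
  have hn0 : n ≠ 0 := by omega
  -- partitions
  have p1 : ∑ q ∈ S n, (q.1 : ℤ) ^ 3 * (q.2.1 : ℤ) ^ 3
      = (∑ q ∈ (S n).filter (fun q => q.2.2.1 < q.2.2.2), (q.1 : ℤ) ^ 3 * (q.2.1 : ℤ) ^ 3)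
        + (∑ q ∈ (S n).filter (fun q => q.2.2.1 = q.2.2.2), (q.1 : ℤ) ^ 3 * (q.2.1 : ℤ) ^ 3)
        + (∑ q ∈ (S n).filter (fun q => q.2.2.2 < q.2.2.1), (q.1 : ℤ) ^ 3 * (q.2.1 : ℤ) ^ 3) :=
    sum_partition _ _ _ _
  have p2 : ∑ q ∈ S n, (q.1 : ℤ) ^ 4 * (q.2.1 : ℤ) ^ 2
      = (∑ q ∈ (S n).filter (fun q => q.2.2.1 < q.2.2.2), (q.1 : ℤ) ^ 4 * (q.2.1 : ℤ) ^ 2)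
        + (∑ q ∈ (S n).filter (fun q => q.2.2.1 = q.2.2.2), (q.1 : ℤ) ^ 4 * (q.2.1 : ℤ) ^ 2)
        + (∑ q ∈ (S n).filter (fun q => q.2.2.2 < q.2.2.1), (q.1 : ℤ) ^ 4 * (q.2.1 : ℤ) ^ 2) :=
    sum_partition _ _ _ _
  have p3 : ∑ q ∈ S n, (q.1 : ℤ) ^ 3 * (q.2.1 : ℤ) ^ 3
      = (∑ q ∈ (S n).filter (fun q => q.1 < q.2.1), (q.1 : ℤ) ^ 3 * (q.2.1 : ℤ) ^ 3)
        + (∑ q ∈ (S n).filter (fun q => q.1 = q.2.1), (q.1 : ℤ) ^ 3 * (q.2.1 : ℤ) ^ 3)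
        + (∑ q ∈ (S n).filter (fun q => q.2.1 < q.1), (q.1 : ℤ) ^ 3 * (q.2.1 : ℤ) ^ 3) :=
    sum_partition _ _ _ _
  have p4 : ∑ q ∈ S n, (q.1 : ℤ) ^ 4 * (q.2.1 : ℤ) ^ 2
      = (∑ q ∈ (S n).filter (fun q => q.1 < q.2.1), (q.1 : ℤ) ^ 4 * (q.2.1 : ℤ) ^ 2)
        + (∑ q ∈ (S n).filter (fun q => q.1 = q.2.1), (q.1 : ℤ) ^ 4 * (q.2.1 : ℤ) ^ 2)
        + (∑ q ∈ (S n).filter (fun q => q.2.1 < q.1), (q.1 : ℤ) ^ 4 * (q.2.1 : ℤ) ^ 2) :=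
    sum_partition _ _ _ _
  -- swaps
  have s1 : ∑ q ∈ (S n).filter (fun q => q.2.2.1 < q.2.2.2), (q.1 : ℤ) ^ 3 * (q.2.1 : ℤ) ^ 3
      = ∑ q ∈ (S n).filter (fun q => q.2.2.2 < q.2.2.1), (q.1 : ℤ) ^ 3 * (q.2.1 : ℤ) ^ 3 := by
    rw [sum_sw (n := n) (fun q => q.2.2.1 < q.2.2.2) (fun q => (q.1 : ℤ) ^ 3 * (q.2.1 : ℤ) ^ 3)]
    apply Finset.sum_congr rfl
    intro q _
    simp only [sw]
    ring
  have s2 : ∑ q ∈ (S n).filter (fun q => q.2.1 < q.1), (q.1 : ℤ) ^ 3 * (q.2.1 : ℤ) ^ 3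
      = ∑ q ∈ (S n).filter (fun q => q.1 < q.2.1), (q.1 : ℤ) ^ 3 * (q.2.1 : ℤ) ^ 3 := by
    rw [sum_sw (n := n) (fun q => q.2.1 < q.1) (fun q => (q.1 : ℤ) ^ 3 * (q.2.1 : ℤ) ^ 3)]
    apply Finset.sum_congr rfl
    intro q _
    simp only [sw]
    ring
  have s3 : ∑ q ∈ (S n).filter (fun q => q.2.2.1 < q.2.2.2), (q.1 : ℤ) ^ 4 * (q.2.1 : ℤ) ^ 2
      = ∑ q ∈ (S n).filter (fun q => q.2.2.2 < q.2.2.1), (q.1 : ℤ) ^ 2 * (q.2.1 : ℤ) ^ 4 := by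
    rw [sum_sw (n := n) (fun q => q.2.2.1 < q.2.2.2) (fun q => (q.1 : ℤ) ^ 4 * (q.2.1 : ℤ) ^ 2)]
    apply Finset.sum_congr rfl
    intro q _
    simp only [sw]
    ring
  have s4 : ∑ q ∈ (S n).filter (fun q => q.2.1 < q.1), (q.1 : ℤ) ^ 4 * (q.2.1 : ℤ) ^ 2
      = ∑ q ∈ (S n).filter (fun q => q.1 < q.2.1), (q.1 : ℤ) ^ 2 * (q.2.1 : ℤ) ^ 4 := by
    rw [sum_sw (n := n) (fun q => q.2.1 < q.1) (fun q => (q.1 : ℤ) ^ 4 * (q.2.1 : ℤ) ^ 2)]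
    apply Finset.sum_congr rfl
    intro q _
    simp only [sw]
    ring
  -- phi
  have f1 : ∑ q ∈ (S n).filter (fun q => q.2.2.2 < q.2.2.1), (q.1 : ℤ) ^ 3 * (q.2.1 : ℤ) ^ 3
      = ∑ q ∈ (S n).filter (fun q => q.1 < q.2.1),
          (q.1 : ℤ) ^ 3 * ((q.2.1 - q.1 : ℕ) : ℤ) ^ 3 :=
    sum_phi (fun a b _ _ => (a : ℤ) ^ 3 * (b : ℤ) ^ 3)
  have f2 : ∑ q ∈ (S n).filter (fun q => q.2.2.2 < q.2.2.1), (q.1 : ℤ) ^ 4 * (q.2.1 : ℤ) ^ 2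
      = ∑ q ∈ (S n).filter (fun q => q.1 < q.2.1),
          (q.1 : ℤ) ^ 4 * ((q.2.1 - q.1 : ℕ) : ℤ) ^ 2 :=
    sum_phi (fun a b _ _ => (a : ℤ) ^ 4 * (b : ℤ) ^ 2)
  have f3 : ∑ q ∈ (S n).filter (fun q => q.2.2.2 < q.2.2.1), (q.1 : ℤ) ^ 2 * (q.2.1 : ℤ) ^ 4
      = ∑ q ∈ (S n).filter (fun q => q.1 < q.2.1),
          (q.1 : ℤ) ^ 2 * ((q.2.1 - q.1 : ℕ) : ℤ) ^ 4 :=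
    sum_phi (fun a b _ _ => (a : ℤ) ^ 2 * (b : ℤ) ^ 4)
  -- the key pointwise algebraic identity on the region a < b
  have key : (2 * ∑ q ∈ (S n).filter (fun q => q.1 < q.2.1),
          (q.1 : ℤ) ^ 3 * ((q.2.1 - q.1 : ℕ) : ℤ) ^ 3)
        + (∑ q ∈ (S n).filter (fun q => q.1 < q.2.1),
          (q.1 : ℤ) ^ 4 * ((q.2.1 - q.1 : ℕ) : ℤ) ^ 2)
        + (∑ q ∈ (S n).filter (fun q => q.1 < q.2.1),
          (q.1 : ℤ) ^ 2 * ((q.2.1 - q.1 : ℕ) : ℤ) ^ 4)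
        + (4 * ∑ q ∈ (S n).filter (fun q => q.1 < q.2.1),
          (q.1 : ℤ) ^ 3 * (q.2.1 : ℤ) ^ 3)
      = (2 * ∑ q ∈ (S n).filter (fun q => q.1 < q.2.1), (q.1 : ℤ) ^ 3 * (q.2.1 : ℤ) ^ 3)
        + (∑ q ∈ (S n).filter (fun q => q.1 < q.2.1), (q.1 : ℤ) ^ 4 * (q.2.1 : ℤ) ^ 2)
        + (∑ q ∈ (S n).filter (fun q => q.1 < q.2.1), (q.1 : ℤ) ^ 2 * (q.2.1 : ℤ) ^ 4) := by
    simp only [Finset.mul_sum, ← Finset.sum_add_distrib]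
    apply Finset.sum_congr rfl
    intro q hq
    rw [mem_filter] at hq
    have hlt : q.1 < q.2.1 := hq.2
    have hcast : ((q.2.1 - q.1 : ℕ) : ℤ) = (q.2.1 : ℤ) - (q.1 : ℤ) := by omega
    rw [hcast]
    ring
  -- diagonal a = b: the two weights agree pointwise
  have d1 : ∑ q ∈ (S n).filter (fun q => q.1 = q.2.1), (q.1 : ℤ) ^ 3 * (q.2.1 : ℤ) ^ 3
      = ∑ q ∈ (S n).filter (fun q => q.1 = q.2.1), (q.1 : ℤ) ^ 4 * (q.2.1 : ℤ) ^ 2 := by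
    apply Finset.sum_congr rfl
    intro q hq
    rw [mem_filter] at hq
    rw [← hq.2]
    ring
  -- diagonal x = y evaluation
  have dxy : ∑ q ∈ (S n).filter (fun q => q.2.2.1 = q.2.2.2),
        ((q.1 : ℤ) ^ 3 * (q.2.1 : ℤ) ^ 3 + (q.1 : ℤ) ^ 4 * (q.2.1 : ℤ) ^ 2)
      = ∑ e ∈ n.divisors, ∑ i ∈ Ico 1 e,
          ((i : ℤ) ^ 3 * ((e - i : ℕ) : ℤ) ^ 3 + (i : ℤ) ^ 4 * ((e - i : ℕ) : ℤ) ^ 2) :=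
    sum_diag hn0 (fun a b => (a : ℤ) ^ 3 * (b : ℤ) ^ 3 + (a : ℤ) ^ 4 * (b : ℤ) ^ 2)
  have dxy' : ∑ q ∈ (S n).filter (fun q => q.2.2.1 = q.2.2.2),
        ((q.1 : ℤ) ^ 3 * (q.2.1 : ℤ) ^ 3 + (q.1 : ℤ) ^ 4 * (q.2.1 : ℤ) ^ 2)
      = (∑ q ∈ (S n).filter (fun q => q.2.2.1 = q.2.2.2), (q.1 : ℤ) ^ 3 * (q.2.1 : ℤ) ^ 3)
        + (∑ q ∈ (S n).filter (fun q => q.2.2.1 = q.2.2.2), (q.1 : ℤ) ^ 4 * (q.2.1 : ℤ) ^ 2) :=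
    Finset.sum_add_distrib
  -- assemble: 2 * V33 = divisor double sum
  have main : 2 * ∑ q ∈ S n, (q.1 : ℤ) ^ 3 * (q.2.1 : ℤ) ^ 3
      = ∑ e ∈ n.divisors, ∑ i ∈ Ico 1 e,
          ((i : ℤ) ^ 3 * ((e - i : ℕ) : ℤ) ^ 3 + (i : ℤ) ^ 4 * ((e - i : ℕ) : ℤ) ^ 2) := by
    rw [← dxy, dxy']
    linarith [p1, p2, p3, p4, s1, s2, s3, s4, f1, f2, f3, key, d1]
  -- the divisor double sum equals (σ₇ − σ₃)/60 · 60
  have hdiv : 60 * ∑ e ∈ n.divisors, ∑ i ∈ Ico 1 e,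
        ((i : ℤ) ^ 3 * ((e - i : ℕ) : ℤ) ^ 3 + (i : ℤ) ^ 4 * ((e - i : ℕ) : ℤ) ^ 2)
      = (sigmaFn 7 n : ℤ) - (sigmaFn 3 n : ℤ) := by
    rw [Finset.mul_sum]
    have hstep : ∀ e ∈ n.divisors, 60 * ∑ i ∈ Ico 1 e,
        ((i : ℤ) ^ 3 * ((e - i : ℕ) : ℤ) ^ 3 + (i : ℤ) ^ 4 * ((e - i : ℕ) : ℤ) ^ 2)
        = (e : ℤ) ^ 7 - (e : ℤ) ^ 3 := fun e _ => faulhaber e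
    rw [Finset.sum_congr rfl hstep, Finset.sum_sub_distrib]
    simp only [sigmaFn]
    push_cast
    rfl
  have hconv : ∑ q ∈ S n, (q.1 : ℤ) ^ 3 * (q.2.1 : ℤ) ^ 3
      = ∑ m ∈ Ico 1 n, (sigmaFn 3 m : ℤ) * (sigmaFn 3 (n - m) : ℤ) := sum_conv
  -- conclude over ℤ
  have final : (sigmaFn 7 n : ℤ)
      = (sigmaFn 3 n : ℤ)
        + 120 * ∑ m ∈ Ico 1 n, (sigmaFn 3 m : ℤ) * (sigmaFn 3 (n - m) : ℤ) := by
    rw [← hconv]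
    linarith [main, hdiv]
  have hcast : ((sigmaFn 7 n : ℕ) : ℤ)
      = ((sigmaFn 3 n + 120 * ∑ m ∈ Finset.Ico 1 n, sigmaFn 3 m * sigmaFn 3 (n - m) : ℕ) : ℤ) := by
    push_cast
    rw [final]
  exact_mod_cast hcast
end

section
/- (Euler's pentagonal number theorem) For every complex number q with |q| < 1, ∏_{n≥1} (1 − q^n) = 1 + ∑_{k≥1} (−1)^k·(q^{k(3k−1)/2} + q^{k(3k+1)/2}). -/
open Finset

namespace PentAux

/-- `Pp q j n = ∏_{i=j+1}^{n} (1 - q^i)`. -/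
noncomputable def Pp (q : ℂ) (j n : ℕ) : ℂ := ∏ i ∈ Finset.Ico (j+1) (n+1), (1 - q ^ i)

noncomputable def Aa (q : ℂ) (n j : ℕ) : ℂ := (-1)^j * q ^ (j*(j+1)/2 + n*j) * Pp q j n

noncomputable def Ll (q : ℂ) (n : ℕ) : ℂ := ∑ j ∈ Finset.range (n+1), Aa q n j

noncomputable def Mm (q : ℂ) (n : ℕ) : ℂ := ∑ j ∈ Finset.range (n+1), Aa q n j * q^j

lemma Pp_self (q : ℂ) (n : ℕ) : Pp q n n = 1 := by simp [Pp]

lemma Pp_bot (q : ℂ) {j n : ℕ} (h : j < n) :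
    Pp q j n = (1 - q^(j+1)) * Pp q (j+1) n :=
  Finset.prod_eq_prod_Ico_succ_bot (by omega) _

lemma Pp_top (q : ℂ) {j n : ℕ} (h : j ≤ n) :
    Pp q j (n+1) = Pp q j n * (1 - q^(n+1)) :=
  Finset.prod_Ico_succ_top (by omega) _

lemma even_pent (n : ℕ) : n*(3*n+1) % 2 = 0 := by
  rcases Nat.even_or_odd n with ⟨m, rfl⟩ | ⟨m, rfl⟩
  · have : (m+m)*(3*(m+m)+1) = 2*(m*(3*(m+m)+1)) := by ring
    omega
  · have : (2*m+1)*(3*(2*m+1)+1) = 2*((2*m+1)*(3*m+2)) := by ring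
    omega

lemma Aa_diag (q : ℂ) (n : ℕ) : Aa q n n = (-1)^n * q ^ (n*(3*n+1)/2) := by
  have he : n*(n+1)/2 + n*n = n*(3*n+1)/2 := by
    have h1 : n*(3*n+1) = n*(n+1) + 2*(n*n) := by ring
    have h2 : n*(n+1) % 2 = 0 := Nat.even_iff.mp (Nat.even_mul_succ_self n)
    omega
  rw [Aa, Pp_self, mul_one, he]

lemma M_eq (q : ℂ) (n : ℕ) :
    (1 - q^(n+1)) * Mm q n = Ll q n + (-1)^(n+1) * q^((n+1)*(3*n+2)/2) := by
  set B : ℕ → ℂ := fun j => (-1)^j * q ^ (j*(j+1)/2 + n*j) * ((1 - q^j) * Pp q j n) with hB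
  have hAB : ∀ j, Aa q n j * q^j = Aa q n j - B j := by
    intro j; simp only [Aa, hB]; ring
  have hB0 : B 0 = 0 := by simp [hB]
  have hBsucc : ∀ k < n, B (k+1) = -(Aa q n k * q^(n+k+1)) := by
    intro k hk
    have hexp : (k+1)*(k+1+1)/2 + n*(k+1) = (k*(k+1)/2 + n*k) + (n+k+1) := by
      have h1 : (k+1)*(k+1+1) = k*(k+1) + 2*(k+1) := by ring
      have h2 : n*(k+1) = n*k + n := by ring
      have h3 : k*(k+1) % 2 = 0 := Nat.even_iff.mp (Nat.even_mul_succ_self k)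
      omega
    have hBval : B (k+1) = (-1)^(k+1) * (q^(k*(k+1)/2 + n*k) * q^(n+k+1)) *
        ((1 - q^(k+1)) * Pp q (k+1) n) := by
      simp only [hB]
      rw [hexp]
      ring
    rw [hBval, Aa, Pp_bot q hk]
    ring
  have hMsum : Mm q n = Ll q n - ∑ j ∈ Finset.range (n+1), B j := by
    rw [Mm, Ll, ← Finset.sum_sub_distrib]
    exact Finset.sum_congr rfl fun j _ => hAB j
  have hBsum : ∑ j ∈ Finset.range (n+1), B j
      = -(q^(n+1) * (Mm q n - Aa q n n * q^n)) := by
    rw [Finset.sum_range_succ', hB0, add_zero]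
    have : ∀ j ∈ Finset.range n, B (j+1) = -(q^(n+1) * (Aa q n j * q^j)) := by
      intro j hj
      rw [hBsucc j (Finset.mem_range.mp hj)]
      rw [show n+j+1 = (n+1)+j by omega, pow_add]
      ring
    rw [Finset.sum_congr rfl this]
    have hM' : Mm q n - Aa q n n * q^n = ∑ j ∈ Finset.range n, Aa q n j * q^j := by
      rw [Mm, Finset.sum_range_succ]; ring
    rw [hM']
    simp [Finset.mul_sum]
  have hfin : (n+1)*(3*n+2)/2 = n*(3*n+1)/2 + (2*n+1) := by
    have h1 : (n+1)*(3*n+2) = n*(3*n+1) + 2*(2*n+1) := by ring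
    have h2 := even_pent n
    omega
  have : Mm q n = Ll q n + q^(n+1) * (Mm q n - Aa q n n * q^n) := by
    linear_combination hMsum - hBsum
  have hAd := Aa_diag q n
  rw [hfin, show (2*n+1 : ℕ) = (n+1)+n by omega]
  linear_combination this - q^(n+1)*q^n*hAd

lemma even_pent2 (n : ℕ) : (n+1)*(n+1+1) % 2 = 0 :=
  Nat.even_iff.mp (Nat.even_mul_succ_self (n+1))

lemma shanks_step (q : ℂ) (n : ℕ) :
    Ll q (n+1) = Ll q n + (-1)^(n+1) *
      (q^((n+1)*(3*(n+1)-1)/2) + q^((n+1)*(3*(n+1)+1)/2)) := by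
  have hdiag : Aa q (n+1) (n+1) = (-1)^(n+1) * q^((n+1)*(3*(n+1)+1)/2) := by
    rw [Aa_diag]
  have hstepj : ∀ j ∈ Finset.range (n+1),
      Aa q (n+1) j = (Aa q n j * q^j) * (1 - q^(n+1)) := by
    intro j hj
    have hjn : j ≤ n := by simpa using Nat.lt_succ_iff.mp (Finset.mem_range.mp hj)
    have hexp : j*(j+1)/2 + (n+1)*j = (j*(j+1)/2 + n*j) + j := by
      have h1 : (n+1)*j = n*j + j := by ring
      omega
    rw [Aa, Aa, Pp_top q hjn, hexp, pow_add]
    ring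
  have hsum : Ll q (n+1) = (1 - q^(n+1)) * Mm q n + Aa q (n+1) (n+1) := by
    rw [Ll, Finset.sum_range_succ, Finset.sum_congr rfl hstepj, Mm, ← Finset.sum_mul]
    ring
  have he1 : (n+1)*(3*(n+1)-1)/2 = (n+1)*(3*n+2)/2 := by
    rw [show 3*(n+1)-1 = 3*n+2 from by omega]
  rw [hsum, M_eq, hdiag, he1]
  ring

lemma shanks (q : ℂ) (n : ℕ) :
    Ll q n = 1 + ∑ k ∈ Finset.range n, (-1 : ℂ)^(k+1) *
      (q ^ ((k + 1) * (3 * (k + 1) - 1) / 2) + q ^ ((k + 1) * (3 * (k + 1) + 1) / 2)) := by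
  induction n with
  | zero => simp [Ll, Aa, Pp_self]
  | succ n ih => rw [shanks_step, ih, Finset.sum_range_succ]; ring

open Filter Topology

lemma Pp_norm_le (q : ℂ) (hq : ‖q‖ < 1) (j n : ℕ) :
    ‖Pp q j n‖ ≤ Real.exp (1 - ‖q‖)⁻¹ := by
  have h0 : (0:ℝ) ≤ ‖q‖ := norm_nonneg q
  rw [Pp, norm_prod]
  calc ∏ i ∈ Finset.Ico (j+1) (n+1), ‖1 - q^i‖
      ≤ ∏ i ∈ Finset.Ico (j+1) (n+1), Real.exp (‖q‖^i) := by
        apply Finset.prod_le_prod (fun i _ => norm_nonneg _)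
        intro i _
        calc ‖1 - q^i‖ ≤ ‖(1:ℂ)‖ + ‖q^i‖ := norm_sub_le _ _
          _ = ‖q‖^i + 1 := by rw [norm_one, norm_pow]; ring
          _ ≤ Real.exp (‖q‖^i) := Real.add_one_le_exp _
    _ = Real.exp (∑ i ∈ Finset.Ico (j+1) (n+1), ‖q‖^i) := (Real.exp_sum _ _).symm
    _ ≤ Real.exp (1 - ‖q‖)⁻¹ := by
        apply Real.exp_le_exp.mpr
        calc ∑ i ∈ Finset.Ico (j+1) (n+1), ‖q‖^i
            ≤ ∑' i : ℕ, ‖q‖^i := Summable.sum_le_tsum _ (fun i _ => pow_nonneg h0 i)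
              (summable_geometric_of_lt_one h0 hq)
          _ = (1 - ‖q‖)⁻¹ := tsum_geometric_of_lt_one h0 hq

lemma err_tendsto (q : ℂ) (hq : ‖q‖ < 1) :
    Tendsto (fun n => ∑ j ∈ Finset.range n, Aa q n (j+1)) atTop (𝓝 0) := by
  have h0 : (0:ℝ) ≤ ‖q‖ := norm_nonneg q
  set r := ‖q‖ with hr
  set Ce := Real.exp (1 - r)⁻¹ with hCe
  have hCe0 : 0 ≤ Ce := (Real.exp_pos _).le
  apply squeeze_zero_norm (a := fun n => (Ce * (1-r)⁻¹) * r^n)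
  · intro n
    have hterm : ∀ j ∈ Finset.range n, ‖Aa q n (j+1)‖ ≤ (Ce * r^n) * r^j := by
      intro j _
      have hle : n + j ≤ (j+1)*(j+1+1)/2 + n*(j+1) := by
        have h1 : (j+1)*(j+1+1) = j*(j+1) + 2*(j+1) := by ring
        have h2 : n*(j+1) = n*j + n := by ring
        omega
      have hpow : r^((j+1)*(j+1+1)/2 + n*(j+1)) ≤ r^(n+j) :=
        pow_le_pow_of_le_one h0 hq.le hle
      calc ‖Aa q n (j+1)‖ = r^((j+1)*(j+1+1)/2 + n*(j+1)) * ‖Pp q (j+1) n‖ := by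
            rw [Aa, norm_mul, norm_mul, norm_pow, norm_neg, norm_one, one_pow,
              one_mul, norm_pow]
        _ ≤ r^(n+j) * Ce :=
            mul_le_mul hpow (Pp_norm_le q hq _ _) (norm_nonneg _) (pow_nonneg h0 _)
        _ = (Ce * r^n) * r^j := by rw [pow_add]; ring
    calc ‖∑ j ∈ Finset.range n, Aa q n (j+1)‖
        ≤ ∑ j ∈ Finset.range n, ‖Aa q n (j+1)‖ := norm_sum_le _ _
      _ ≤ ∑ j ∈ Finset.range n, (Ce * r^n) * r^j := Finset.sum_le_sum hterm
      _ = (Ce * r^n) * ∑ j ∈ Finset.range n, r^j := by rw [← Finset.mul_sum]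
      _ ≤ (Ce * r^n) * (1 - r)⁻¹ := by
          apply mul_le_mul_of_nonneg_left _ (mul_nonneg hCe0 (pow_nonneg h0 _))
          calc ∑ j ∈ Finset.range n, r^j ≤ ∑' j : ℕ, r^j :=
              Summable.sum_le_tsum _ (fun i _ => pow_nonneg h0 i)
                (summable_geometric_of_lt_one h0 hq)
            _ = (1 - r)⁻¹ := tsum_geometric_of_lt_one h0 hq
      _ = (Ce * (1-r)⁻¹) * r^n := by ring
  · have := (tendsto_pow_atTop_nhds_zero_of_lt_one h0 hq).const_mul (Ce * (1-r)⁻¹)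
    simpa using this

end PentAux

open PentAux Filter Topology in
/-- Euler's pentagonal number theorem: for `|q| < 1`,
`∏_{n≥1} (1 − q^n) = 1 + ∑_{k≥1} (−1)^k·(q^{k(3k−1)/2} + q^{k(3k+1)/2})`. -/
theorem pentagonal_number_theorem (q : ℂ) (hq : ‖q‖ < 1) :
    ∏' n : ℕ, (1 - q ^ (n + 1)) =
      1 + ∑' k : ℕ, (-1 : ℂ) ^ (k + 1) *
        (q ^ ((k + 1) * (3 * (k + 1) - 1) / 2) + q ^ ((k + 1) * (3 * (k + 1) + 1) / 2)) := by
  have hq' : ‖q‖ < 1 := hq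
  have h0 : (0:ℝ) ≤ ‖q‖ := norm_nonneg q
  -- Summability of the pentagonal series
  have hgeom : Summable (fun k : ℕ => 2 * ‖q‖^(k+1)) := by
    have := (summable_geometric_of_lt_one h0 hq').mul_left (2 * ‖q‖)
    apply this.congr
    intro k
    rw [pow_succ]
    ring
  have hSsum : Summable (fun k : ℕ => (-1 : ℂ) ^ (k + 1) *
      (q ^ ((k + 1) * (3 * (k + 1) - 1) / 2) + q ^ ((k + 1) * (3 * (k + 1) + 1) / 2))) := by
    apply Summable.of_norm_bounded hgeom
    intro k
    have he1 : k + 1 ≤ (k + 1) * (3 * (k + 1) - 1) / 2 := by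
      have h1 : (k+1)*(3*(k+1)-1) = 2*(k+1) + (3*k)*(k+1) := by
        rw [show 3*(k+1)-1 = 3*k+2 from by omega]; ring
      omega
    have he2 : k + 1 ≤ (k + 1) * (3 * (k + 1) + 1) / 2 := by
      have h1 : (k+1)*(3*(k+1)+1) = 2*(k+1) + (3*k+2)*(k+1) := by ring
      omega
    calc ‖(-1 : ℂ) ^ (k + 1) *
        (q ^ ((k + 1) * (3 * (k + 1) - 1) / 2) + q ^ ((k + 1) * (3 * (k + 1) + 1) / 2))‖
        = ‖q ^ ((k + 1) * (3 * (k + 1) - 1) / 2) + q ^ ((k + 1) * (3 * (k + 1) + 1) / 2)‖ := by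
          rw [norm_mul, norm_pow, norm_neg, norm_one, one_pow, one_mul]
      _ ≤ ‖q‖ ^ ((k + 1) * (3 * (k + 1) - 1) / 2) + ‖q‖ ^ ((k + 1) * (3 * (k + 1) + 1) / 2) := by
          rw [← norm_pow, ← norm_pow]; exact norm_add_le _ _
      _ ≤ ‖q‖^(k+1) + ‖q‖^(k+1) :=
          add_le_add (pow_le_pow_of_le_one h0 hq'.le he1) (pow_le_pow_of_le_one h0 hq'.le he2)
      _ = 2 * ‖q‖^(k+1) := by ring
  -- Multipliability of the product
  have hlt : ∀ n : ℕ, ‖q^(n+1)‖ < 1 := by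
    intro n
    rw [norm_pow]
    exact pow_lt_one₀ h0 hq' (Nat.succ_ne_zero n)
  have hne : ∀ n : ℕ, (1 - q^(n+1)) ≠ 0 := by
    intro n
    rw [sub_ne_zero]
    intro h
    have := hlt n
    rw [← h, norm_one] at this
    linarith
  have hlog : Summable (fun n : ℕ => Complex.log (1 - q^(n+1))) := by
    have hg : Summable (fun n : ℕ => 3/2 * ‖q‖^(n+1)) := by
      have := (summable_geometric_of_lt_one h0 hq').mul_left (3/2 * ‖q‖)
      apply this.congr
      intro k
      rw [pow_succ]
      ring
    apply Summable.of_norm_bounded_eventually hg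
    rw [Nat.cofinite_eq_atTop]
    have hev : ∀ᶠ n : ℕ in atTop, ‖q‖^n ≤ 1/2 :=
      (tendsto_pow_atTop_nhds_zero_of_lt_one h0 hq').eventually
        (eventually_le_nhds (by norm_num))
    filter_upwards [hev] with n hn
    have hhalf : ‖-(q^(n+1))‖ ≤ 1/2 := by
      rw [norm_neg, norm_pow]
      calc ‖q‖^(n+1) ≤ ‖q‖^n := pow_le_pow_of_le_one h0 hq'.le (Nat.le_succ n)
        _ ≤ 1/2 := hn
    have := Complex.norm_log_one_add_half_le_self hhalf
    rw [norm_neg, norm_pow] at this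
    calc ‖Complex.log (1 - q^(n+1))‖
        = ‖Complex.log (1 + -(q^(n+1)))‖ := by rw [sub_eq_add_neg]
      _ ≤ 3/2 * ‖q‖^(n+1) := this
  have hmul : Multipliable (fun n : ℕ => 1 - q^(n+1)) := by
    have := Complex.multipliable_of_summable_log hlog
    exact this
  have hprod := hmul.hasProd.tendsto_prod_nat
  -- Decomposition of `Ll`
  have hLdec : ∀ n, Ll q n = (∏ i ∈ Finset.range n, (1 - q^(i+1)))
      + ∑ j ∈ Finset.range n, Aa q n (j+1) := by
    intro n
    rw [Ll, Finset.sum_range_succ']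
    have hA0 : Aa q n 0 = ∏ i ∈ Finset.range n, (1 - q^(i+1)) := by
      rw [Aa]
      simp only [pow_zero, Nat.zero_mul, Nat.mul_zero, one_mul, Nat.zero_div, add_zero]
      rw [Pp, Finset.prod_Ico_eq_prod_range]
      simp [add_comm]
    rw [hA0, add_comm]
  -- limits
  have hLlim : Tendsto (fun n => Ll q n) atTop
      (𝓝 (1 + ∑' k : ℕ, (-1 : ℂ) ^ (k + 1) *
        (q ^ ((k + 1) * (3 * (k + 1) - 1) / 2) + q ^ ((k + 1) * (3 * (k + 1) + 1) / 2)))) := by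
    simp only [shanks q]
    exact tendsto_const_nhds.add hSsum.hasSum.tendsto_sum_nat
  have h2 : Tendsto (fun n => ∏ i ∈ Finset.range n, (1 - q^(i+1))) atTop
      (𝓝 (1 + ∑' k : ℕ, (-1 : ℂ) ^ (k + 1) *
        (q ^ ((k + 1) * (3 * (k + 1) - 1) / 2) + q ^ ((k + 1) * (3 * (k + 1) + 1) / 2)))) := by
    have := hLlim.sub (err_tendsto q hq')
    rw [sub_zero] at this
    apply this.congr
    intro n
    rw [hLdec n]
    ring
  exact tendsto_nhds_unique hprod h2
end

section
/- Fix an integer k. For each integer n ≥ 1 define the Hecke operator T(n) on sequences a: ℤ_{≥0} → ℂ by (T(n)a)(m) = ∑_{d | gcd(m,n), d>0} d^{k−1}·a(mn/d²) (with the convention gcd(0,n) = n). Then for all m, n ≥ 1 one has the composition identity T(n)∘T(m) = ∑_{d | gcd(n,m), d>0} d^{k−1}·T(nm/d²), as operators on the space of all sequences a: ℤ_{≥0} → ℂ. -/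
private lemma div_ne_zero' {x y : ℕ} (h : y ∣ x) (hx : x ≠ 0) : x / y ≠ 0 := by
  intro h0
  exact hx (by rw [← Nat.div_mul_cancel h, h0, zero_mul])

private lemma dvd_of_fact_le {x y : ℕ} (hx : x ≠ 0) (hy : y ≠ 0)
    (h : ∀ p, x.factorization p ≤ y.factorization p) : x ∣ y :=
  (Nat.factorization_le_iff_dvd hx hy).1 (Finsupp.le_def.2 h)

private lemma fact_le_of_dvd {x y : ℕ} (hy : y ≠ 0) (h : x ∣ y) (p : ℕ) :
    x.factorization p ≤ y.factorization p := by
  have hx : x ≠ 0 := by rintro rfl; exact hy (zero_dvd_iff.1 h)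
  exact Finsupp.le_def.1 ((Nat.factorization_le_iff_dvd hx hy).2 h) p

/-- The key divisibility facts behind the Hecke composition bijection. -/
private lemma hecke_key {N n m d e : ℕ} (hN : N ≠ 0) (hn : n ≠ 0) (hm : m ≠ 0)
    (hd : d ∣ Nat.gcd N n) (he : e ∣ Nat.gcd m (N * n / d ^ 2)) :
    Nat.gcd (d * e) N ∣ d * Nat.gcd (d * e) m ∧
    Nat.gcd (d * e) m ∣ e * Nat.gcd (d * e) N ∧
    d * Nat.gcd (d * e) m / Nat.gcd (d * e) N ∣ Nat.gcd n m ∧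
    e * Nat.gcd (d * e) N / Nat.gcd (d * e) m ∣
      Nat.gcd N (m * n / (d * Nat.gcd (d * e) m / Nat.gcd (d * e) N) ^ 2) := by
  have hdN : d ∣ N := hd.trans (Nat.gcd_dvd_left _ _)
  have hdn : d ∣ n := hd.trans (Nat.gcd_dvd_right _ _)
  have hem : e ∣ m := he.trans (Nat.gcd_dvd_left _ _)
  have heq : e ∣ N * n / d ^ 2 := he.trans (Nat.gcd_dvd_right _ _)
  have hd0 : d ≠ 0 := by rintro rfl; exact hN (zero_dvd_iff.1 hdN)
  have he0 : e ≠ 0 := by rintro rfl; exact hm (zero_dvd_iff.1 hem)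
  have ht0 : d * e ≠ 0 := mul_ne_zero hd0 he0
  have hd2 : d ^ 2 ∣ N * n := by rw [pow_two]; exact mul_dvd_mul hdN hdn
  have hNn0 : N * n ≠ 0 := mul_ne_zero hN hn
  have hgN0 : Nat.gcd (d * e) N ≠ 0 := Nat.gcd_ne_zero_right hN
  have hgm0 : Nat.gcd (d * e) m ≠ 0 := Nat.gcd_ne_zero_right hm
  have hgN : ∀ p, (Nat.gcd (d * e) N).factorization p
      = min (d.factorization p + e.factorization p) (N.factorization p) := by
    intro p
    rw [Nat.factorization_gcd ht0 hN, Finsupp.inf_apply, Nat.factorization_mul hd0 he0,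
      Finsupp.add_apply]
  have hgm : ∀ p, (Nat.gcd (d * e) m).factorization p
      = min (d.factorization p + e.factorization p) (m.factorization p) := by
    intro p
    rw [Nat.factorization_gcd ht0 hm, Finsupp.inf_apply, Nat.factorization_mul hd0 he0,
      Finsupp.add_apply]
  have hα : ∀ p, e.factorization p ≤ m.factorization p := fact_le_of_dvd hm hem
  have hγ : ∀ p, d.factorization p ≤ N.factorization p := fact_le_of_dvd hN hdN
  have hβ : ∀ p, d.factorization p ≤ n.factorization p := fact_le_of_dvd hn hdn
  have hq : ∀ p, e.factorization p + 2 * d.factorization p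
      ≤ N.factorization p + n.factorization p := by
    intro p
    have h1 := fact_le_of_dvd (div_ne_zero' hd2 hNn0) heq p
    rw [Nat.factorization_div hd2, Finsupp.tsub_apply, Nat.factorization_mul hN hn,
      Finsupp.add_apply, Nat.factorization_pow, Finsupp.smul_apply, smul_eq_mul] at h1
    have h2 := hγ p; have h3 := hβ p
    omega
  have ha : Nat.gcd (d * e) N ∣ d * Nat.gcd (d * e) m := by
    refine dvd_of_fact_le hgN0 (mul_ne_zero hd0 hgm0) fun p => ?_
    rw [Nat.factorization_mul hd0 hgm0, Finsupp.add_apply, hgN p, hgm p]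
    have := hα p; have := hγ p; have := hβ p; have := hq p; omega
  have hb : Nat.gcd (d * e) m ∣ e * Nat.gcd (d * e) N := by
    refine dvd_of_fact_le hgm0 (mul_ne_zero he0 hgN0) fun p => ?_
    rw [Nat.factorization_mul he0 hgN0, Finsupp.add_apply, hgN p, hgm p]
    have := hα p; have := hγ p; have := hβ p; have := hq p; omega
  have hc0 : d * Nat.gcd (d * e) m / Nat.gcd (d * e) N ≠ 0 :=
    div_ne_zero' ha (mul_ne_zero hd0 hgm0)
  have hf0 : e * Nat.gcd (d * e) N / Nat.gcd (d * e) m ≠ 0 :=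
    div_ne_zero' hb (mul_ne_zero he0 hgN0)
  have hcfact : ∀ p, (d * Nat.gcd (d * e) m / Nat.gcd (d * e) N).factorization p
      = d.factorization p
        + min (d.factorization p + e.factorization p) (m.factorization p)
        - min (d.factorization p + e.factorization p) (N.factorization p) := by
    intro p
    rw [Nat.factorization_div ha, Finsupp.tsub_apply, Nat.factorization_mul hd0 hgm0,
      Finsupp.add_apply, hgm p, hgN p]
  have hffact : ∀ p, (e * Nat.gcd (d * e) N / Nat.gcd (d * e) m).factorization p
      = e.factorization p
        + min (d.factorization p + e.factorization p) (N.factorization p)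
        - min (d.factorization p + e.factorization p) (m.factorization p) := by
    intro p
    rw [Nat.factorization_div hb, Finsupp.tsub_apply, Nat.factorization_mul he0 hgN0,
      Finsupp.add_apply, hgN p, hgm p]
  have hc_gcd : d * Nat.gcd (d * e) m / Nat.gcd (d * e) N ∣ Nat.gcd n m := by
    refine dvd_of_fact_le hc0 (Nat.gcd_ne_zero_left hn) fun p => ?_
    rw [hcfact p, Nat.factorization_gcd hn hm, Finsupp.inf_apply]
    have := hα p; have := hγ p; have := hβ p; have := hq p; omega
  have hfN : e * Nat.gcd (d * e) N / Nat.gcd (d * e) m ∣ N := by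
    refine dvd_of_fact_le hf0 hN fun p => ?_
    rw [hffact p]
    have := hα p; have := hγ p; have := hβ p; have := hq p; omega
  have hcn : d * Nat.gcd (d * e) m / Nat.gcd (d * e) N ∣ n :=
    hc_gcd.trans (Nat.gcd_dvd_left _ _)
  have hcm : d * Nat.gcd (d * e) m / Nat.gcd (d * e) N ∣ m :=
    hc_gcd.trans (Nat.gcd_dvd_right _ _)
  have hc2 : (d * Nat.gcd (d * e) m / Nat.gcd (d * e) N) ^ 2 ∣ m * n := by
    rw [pow_two]; exact mul_dvd_mul hcm hcn
  have hfdiv : e * Nat.gcd (d * e) N / Nat.gcd (d * e) m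
      ∣ m * n / (d * Nat.gcd (d * e) m / Nat.gcd (d * e) N) ^ 2 := by
    rw [Nat.dvd_div_iff_mul_dvd hc2]
    refine dvd_of_fact_le (mul_ne_zero (pow_ne_zero 2 hc0) hf0) (mul_ne_zero hm hn)
      fun p => ?_
    rw [Nat.factorization_mul (pow_ne_zero 2 hc0) hf0, Finsupp.add_apply,
      Nat.factorization_pow, Finsupp.smul_apply, smul_eq_mul, hcfact p, hffact p,
      Nat.factorization_mul hm hn, Finsupp.add_apply]
    have := hα p; have := hγ p; have := hβ p; have := hq p; omega
  exact ⟨ha, hb, hc_gcd, Nat.dvd_gcd hfN hfdiv⟩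

private lemma cf_mul {d e gN gm : ℕ} (hgN : gN ≠ 0) (hgm : gm ≠ 0)
    (ha : gN ∣ d * gm) (hb : gm ∣ e * gN) :
    d * gm / gN * (e * gN / gm) = d * e := by
  rw [Nat.div_mul_div_comm ha hb, show d * gm * (e * gN) = d * e * (gN * gm) by ring,
    Nat.mul_div_cancel _ (Nat.pos_of_ne_zero (mul_ne_zero hgN hgm))]

private lemma c_back {d gN gm : ℕ} (hgN : gN ≠ 0) (hgm : gm ≠ 0) (ha : gN ∣ d * gm) :
    d * gm / gN * gN / gm = d := by
  rw [Nat.div_mul_cancel ha, Nat.mul_div_cancel _ (Nat.pos_of_ne_zero hgm)]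

/-- Core combinatorial identity. -/
private lemma hecke_core (N n m : ℕ) (hN : N ≠ 0) (hn : n ≠ 0) (hm : m ≠ 0) (F : ℕ → ℂ) :
    ∑ d ∈ (Nat.gcd N n).divisors, ∑ e ∈ (Nat.gcd m (N * n / d ^ 2)).divisors, F (d * e) =
    ∑ c ∈ (Nat.gcd m n).divisors, ∑ f ∈ (Nat.gcd N (m * n / c ^ 2)).divisors, F (c * f) := by
  rw [Finset.sum_sigma', Finset.sum_sigma']
  refine Finset.sum_nbij'
    (fun x => ⟨x.1 * Nat.gcd (x.1 * x.2) m / Nat.gcd (x.1 * x.2) N,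
               x.2 * Nat.gcd (x.1 * x.2) N / Nat.gcd (x.1 * x.2) m⟩)
    (fun y => ⟨y.1 * Nat.gcd (y.1 * y.2) N / Nat.gcd (y.1 * y.2) m,
               y.2 * Nat.gcd (y.1 * y.2) m / Nat.gcd (y.1 * y.2) N⟩)
    ?_ ?_ ?_ ?_ ?_
  · rintro ⟨d, e⟩ hmem
    simp only [Finset.mem_sigma, Nat.mem_divisors] at hmem ⊢
    obtain ⟨⟨hd, -⟩, he, -⟩ := hmem
    obtain ⟨-, -, h3, h4⟩ := hecke_key hN hn hm hd he
    rw [Nat.gcd_comm n m] at h3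
    exact ⟨⟨h3, Nat.gcd_ne_zero_left hm⟩, h4, Nat.gcd_ne_zero_left hN⟩
  · rintro ⟨c, f⟩ hmem
    simp only [Finset.mem_sigma, Nat.mem_divisors] at hmem ⊢
    obtain ⟨⟨hc, -⟩, hf, -⟩ := hmem
    obtain ⟨-, -, h3, h4⟩ := hecke_key hm hn hN hc hf
    rw [Nat.gcd_comm n N] at h3
    exact ⟨⟨h3, Nat.gcd_ne_zero_left hN⟩, h4, Nat.gcd_ne_zero_left hm⟩
  · rintro ⟨d, e⟩ hmem
    simp only [Finset.mem_sigma, Nat.mem_divisors] at hmem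
    obtain ⟨⟨hd, -⟩, he, -⟩ := hmem
    obtain ⟨ha, hb, -, -⟩ := hecke_key hN hn hm hd he
    have hgN0 : Nat.gcd (d * e) N ≠ 0 := Nat.gcd_ne_zero_right hN
    have hgm0 : Nat.gcd (d * e) m ≠ 0 := Nat.gcd_ne_zero_right hm
    have hcf : d * Nat.gcd (d * e) m / Nat.gcd (d * e) N
        * (e * Nat.gcd (d * e) N / Nat.gcd (d * e) m) = d * e := cf_mul hgN0 hgm0 ha hb
    refine Sigma.ext ?_ (heq_of_eq ?_) <;> simp only [hcf]
    · exact c_back hgN0 hgm0 ha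
    · exact c_back hgm0 hgN0 hb
  · rintro ⟨c, f⟩ hmem
    simp only [Finset.mem_sigma, Nat.mem_divisors] at hmem
    obtain ⟨⟨hc, -⟩, hf, -⟩ := hmem
    obtain ⟨ha, hb, -, -⟩ := hecke_key hm hn hN hc hf
    have hgm0 : Nat.gcd (c * f) m ≠ 0 := Nat.gcd_ne_zero_right hm
    have hgN0 : Nat.gcd (c * f) N ≠ 0 := Nat.gcd_ne_zero_right hN
    have hcf : c * Nat.gcd (c * f) N / Nat.gcd (c * f) m
        * (f * Nat.gcd (c * f) m / Nat.gcd (c * f) N) = c * f := cf_mul hgm0 hgN0 ha hb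
    refine Sigma.ext ?_ (heq_of_eq ?_) <;> simp only [hcf]
    · exact c_back hgm0 hgN0 ha
    · exact c_back hgN0 hgm0 hb
  · rintro ⟨d, e⟩ hmem
    simp only [Finset.mem_sigma, Nat.mem_divisors] at hmem
    obtain ⟨⟨hd, -⟩, he, -⟩ := hmem
    obtain ⟨ha, hb, -, -⟩ := hecke_key hN hn hm hd he
    have hgN0 : Nat.gcd (d * e) N ≠ 0 := Nat.gcd_ne_zero_right hN
    have hgm0 : Nat.gcd (d * e) m ≠ 0 := Nat.gcd_ne_zero_right hm
    rw [cf_mul hgN0 hgm0 ha hb]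


/-- The Hecke operator `T(n)` in weight `k`, acting on sequences `a : ℤ_{≥0} → ℂ` of Fourier
coefficients: `(T(n)a)(m) = ∑_{d | gcd(m,n), d>0} d^{k−1}·a(mn/d²)`.  (Note that in Lean's
convention `Nat.gcd 0 n = n`, matching the convention `gcd(0,n) = n`.) -/
noncomputable def heckeT (k : ℤ) (n : ℕ) (a : ℕ → ℂ) : ℕ → ℂ := fun m =>
  ∑ d ∈ (Nat.gcd m n).divisors, (d : ℂ) ^ (k - 1) * a (m * n / d ^ 2)

/-- Composition identity for Hecke operators:
`T(n)∘T(m) = ∑_{d | gcd(n,m), d>0} d^{k−1}·T(nm/d²)` as operators on sequences. -/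
theorem heckeT_comp (k : ℤ) (m n : ℕ) (hm : 1 ≤ m) (hn : 1 ≤ n) :
    heckeT k n ∘ heckeT k m =
      fun a => fun m' =>
        ∑ d ∈ (Nat.gcd n m).divisors, (d : ℂ) ^ (k - 1) * heckeT k (n * m / d ^ 2) a m' := by
  funext a m'
  simp only [Function.comp_apply]
  have hn0 : n ≠ 0 := by omega
  have hm0 : m ≠ 0 := by omega
  rcases eq_or_ne m' 0 with rfl | hm'
  · -- m' = 0 : apply the core identity with N = (n*m)^2
    have hN0 : (n * m) ^ 2 ≠ 0 := by positivity
    have key := hecke_core ((n * m) ^ 2) n m hN0 hn0 hm0 (fun t => (t : ℂ) ^ (k - 1) * a 0)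
    have e1 : heckeT k n (heckeT k m a) 0
        = ∑ d ∈ (Nat.gcd ((n * m) ^ 2) n).divisors,
            ∑ e ∈ (Nat.gcd m ((n * m) ^ 2 * n / d ^ 2)).divisors,
              ((d * e : ℕ) : ℂ) ^ (k - 1) * a 0 := by
      have hgN : Nat.gcd ((n * m) ^ 2) n = n :=
        Nat.gcd_eq_right ((dvd_mul_right n m).trans (dvd_pow_self _ two_ne_zero))
      simp only [heckeT, Nat.gcd_zero_left, zero_mul, Nat.zero_div]
      rw [hgN]
      refine Finset.sum_congr rfl fun d hd => ?_
      obtain ⟨hdn, -⟩ := Nat.mem_divisors.1 hd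
      have hd0 : d ≠ 0 := by rintro rfl; exact hn0 (zero_dvd_iff.1 hdn)
      have hmdvd : m ∣ (n * m) ^ 2 * n / d ^ 2 := by
        obtain ⟨u, rfl⟩ := hdn
        rw [show (d * u * m) ^ 2 * (d * u) = d ^ 2 * (u ^ 2 * m ^ 2 * (d * u)) by ring,
          Nat.mul_div_cancel_left _ (Nat.pos_of_ne_zero (pow_ne_zero 2 hd0))]
        exact ⟨u ^ 2 * m * (d * u), by ring⟩
      rw [Nat.gcd_eq_left hmdvd, Finset.mul_sum]
      refine Finset.sum_congr rfl fun e he => ?_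
      push_cast
      rw [mul_zpow]
      ring
    have e2 : (∑ c ∈ (Nat.gcd n m).divisors, (c : ℂ) ^ (k - 1) * heckeT k (n * m / c ^ 2) a 0)
        = ∑ c ∈ (Nat.gcd m n).divisors,
            ∑ f ∈ (Nat.gcd ((n * m) ^ 2) (m * n / c ^ 2)).divisors,
              ((c * f : ℕ) : ℂ) ^ (k - 1) * a 0 := by
      rw [Nat.gcd_comm n m]
      refine Finset.sum_congr rfl fun c hc => ?_
      obtain ⟨hcg, -⟩ := Nat.mem_divisors.1 hc
      have hc2 : c ^ 2 ∣ n * m := by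
        rw [pow_two]
        exact mul_dvd_mul (hcg.trans (Nat.gcd_dvd_right _ _)) (hcg.trans (Nat.gcd_dvd_left _ _))
      have hgf : Nat.gcd ((n * m) ^ 2) (m * n / c ^ 2) = n * m / c ^ 2 := by
        rw [mul_comm m n]
        exact Nat.gcd_eq_right ((Nat.div_dvd_of_dvd hc2).trans (dvd_pow_self _ two_ne_zero))
      simp only [heckeT, Nat.gcd_zero_left, zero_mul, Nat.zero_div]
      rw [hgf, Finset.mul_sum]
      refine Finset.sum_congr rfl fun f hf => ?_
      push_cast
      rw [mul_zpow]
      ring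
    rw [e1, e2]
    exact key
  · -- m' ≠ 0
    have key := hecke_core m' n m hm' hn0 hm0
      (fun t => (t : ℂ) ^ (k - 1) * a (m' * n * m / t ^ 2))
    have e1 : heckeT k n (heckeT k m a) m'
        = ∑ d ∈ (Nat.gcd m' n).divisors, ∑ e ∈ (Nat.gcd m (m' * n / d ^ 2)).divisors,
            ((d * e : ℕ) : ℂ) ^ (k - 1) * a (m' * n * m / (d * e) ^ 2) := by
      simp only [heckeT]
      refine Finset.sum_congr rfl fun d hd => ?_
      obtain ⟨hdg, -⟩ := Nat.mem_divisors.1 hd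
      have hd0 : d ≠ 0 := by
        rintro rfl; exact hm' (zero_dvd_iff.1 (hdg.trans (Nat.gcd_dvd_left _ _)))
      have hd2 : d ^ 2 ∣ m' * n := by
        rw [pow_two]
        exact mul_dvd_mul (hdg.trans (Nat.gcd_dvd_left _ _)) (hdg.trans (Nat.gcd_dvd_right _ _))
      rw [Nat.gcd_comm (m' * n / d ^ 2) m, Finset.mul_sum]
      refine Finset.sum_congr rfl fun e he => ?_
      have harg : m' * n / d ^ 2 * m / e ^ 2 = m' * n * m / (d * e) ^ 2 := by
        obtain ⟨B, hB⟩ := hd2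
        rw [hB, Nat.mul_div_cancel_left _ (Nat.pos_of_ne_zero (pow_ne_zero 2 hd0)), mul_pow,
          show d ^ 2 * B * m = d ^ 2 * (B * m) by ring,
          Nat.mul_div_mul_left _ _ (Nat.pos_of_ne_zero (pow_ne_zero 2 hd0))]
      rw [harg]
      push_cast
      rw [mul_zpow]
      ring
    have e2 : (∑ c ∈ (Nat.gcd n m).divisors, (c : ℂ) ^ (k - 1) * heckeT k (n * m / c ^ 2) a m')
        = ∑ c ∈ (Nat.gcd m n).divisors, ∑ f ∈ (Nat.gcd m' (m * n / c ^ 2)).divisors,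
            ((c * f : ℕ) : ℂ) ^ (k - 1) * a (m' * n * m / (c * f) ^ 2) := by
      rw [Nat.gcd_comm n m]
      refine Finset.sum_congr rfl fun c hc => ?_
      obtain ⟨hcg, -⟩ := Nat.mem_divisors.1 hc
      have hc0 : c ≠ 0 := by
        rintro rfl; exact hm0 (zero_dvd_iff.1 (hcg.trans (Nat.gcd_dvd_left _ _)))
      have hc2 : c ^ 2 ∣ n * m := by
        rw [pow_two]
        exact mul_dvd_mul (hcg.trans (Nat.gcd_dvd_right _ _)) (hcg.trans (Nat.gcd_dvd_left _ _))
      simp only [heckeT]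
      rw [mul_comm m n, Finset.mul_sum]
      refine Finset.sum_congr rfl fun f hf => ?_
      have harg : m' * (n * m / c ^ 2) / f ^ 2 = m' * n * m / (c * f) ^ 2 := by
        obtain ⟨B, hB⟩ := hc2
        rw [hB, Nat.mul_div_cancel_left _ (Nat.pos_of_ne_zero (pow_ne_zero 2 hc0)), mul_pow,
          show m' * n * m = c ^ 2 * (m' * B) by rw [mul_assoc, hB]; ring,
          Nat.mul_div_mul_left _ _ (Nat.pos_of_ne_zero (pow_ne_zero 2 hc0))]
      rw [harg]
      push_cast
      rw [mul_zpow]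
      ring
    rw [e1, e2]
    exact key
end

section
/- Let k be an integer and let a: ℤ_{≥1} → ℂ satisfy a(1) = 1, a(mn) = a(m)·a(n) whenever gcd(m,n) = 1, and a(p^{j+1}) = a(p)·a(p^j) − p^{k−1}·a(p^{j−1}) for every prime p and every j ≥ 1. Then for every complex number s such that ∑_{n≥1} |a(n)|·n^{−Re(s)} converges, one has the absolutely convergent Euler product ∑_{n≥1} a(n)·n^{−s} = ∏_{p prime} (1 − a(p)·p^{−s} + p^{k−1−2s})^{−1}. -/
open Complex

/-- Euler product for the Dirichlet series attached to a normalized Hecke eigenform of weight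
`k`: if `a(1) = 1`, `a(mn) = a(m)a(n)` for coprime `m,n`, and
`a(p^{j+1}) = a(p)a(p^j) − p^{k−1}a(p^{j−1})` for all primes `p` and `j ≥ 1`, then for every
`s ∈ ℂ` for which `∑_{n≥1} |a(n)|·n^{−Re s}` converges, one has the absolutely convergent
Euler product `∑_{n≥1} a(n) n^{−s} = ∏_p (1 − a(p) p^{−s} + p^{k−1−2s})^{−1}`. -/
theorem eigenform_euler_product (k : ℤ) (a : ℕ → ℂ)
    (h1 : a 1 = 1)
    (hmul : ∀ m n : ℕ, 1 ≤ m → 1 ≤ n → Nat.gcd m n = 1 → a (m * n) = a m * a n)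
    (hrec : ∀ p : ℕ, p.Prime → ∀ j : ℕ, 1 ≤ j →
      a (p ^ (j + 1)) = a p * a (p ^ j) - (p : ℂ) ^ ((k : ℂ) - 1) * a (p ^ (j - 1)))
    (s : ℂ)
    (hconv : Summable (fun n : ℕ => ‖a (n + 1)‖ * ((n + 1 : ℕ) : ℝ) ^ (-s.re))) :
    Multipliable (fun p : Nat.Primes =>
      (1 - a p * (p : ℂ) ^ (-s) + (p : ℂ) ^ ((k : ℂ) - 1 - 2 * s))⁻¹) ∧
    ∑' n : ℕ, a (n + 1) * ((n + 1 : ℕ) : ℂ) ^ (-s) =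
      ∏' p : Nat.Primes,
        (1 - a p * (p : ℂ) ^ (-s) + (p : ℂ) ^ ((k : ℂ) - 1 - 2 * s))⁻¹ := by
  classical
  -- the completed coefficient function
  set f : ℕ → ℂ := fun n => if n = 0 then 0 else a n * (n : ℂ) ^ (-s) with hf
  have hf0 : f 0 = 0 := by simp [hf]
  have hf1 : f 1 = 1 := by simp [hf, h1]
  have hfpos : ∀ n : ℕ, n ≠ 0 → f n = a n * (n : ℂ) ^ (-s) := by
    intro n hn; simp [hf, hn]
  -- multiplicativity of f on coprime arguments
  have hfmul : ∀ {m n : ℕ}, Nat.Coprime m n → f (m * n) = f m * f n := by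
    intro m n hmn
    rcases Nat.eq_zero_or_pos m with hm | hm
    · subst hm
      have : n = 1 := by simpa [Nat.Coprime] using hmn
      simp [this, hf0, hf1]
    rcases Nat.eq_zero_or_pos n with hn | hn
    · subst hn
      have : m = 1 := by simpa [Nat.Coprime] using hmn
      simp [this, hf0, hf1]
    rw [hfpos _ (by positivity), hfpos _ hm.ne', hfpos _ hn.ne',
      hmul m n hm hn hmn, Nat.cast_mul, natCast_mul_natCast_cpow]
    ring
  -- norm-summability
  have hnorm : ∀ n : ℕ, ‖f (n + 1)‖ =
      ‖a (n + 1)‖ * ((n + 1 : ℕ) : ℝ) ^ (-s.re) := by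
    intro n
    rw [hfpos _ (Nat.succ_ne_zero n), norm_mul, norm_natCast_cpow_of_pos (Nat.succ_pos n)]
    simp
  have hsum : Summable (fun n => ‖f n‖) := by
    rw [← summable_nat_add_iff 1]
    exact hconv.congr fun n => (hnorm n).symm
  -- the Euler product from Mathlib
  have hEP := EulerProduct.eulerProduct_hasProd hf1 (fun {m n} h => hfmul h) hsum hf0
  -- evaluation of the local factors
  have hlocal : ∀ p : Nat.Primes,
      (∑' e : ℕ, f ((p : ℕ) ^ e)) =
        (1 - a p * (p : ℂ) ^ (-s) + (p : ℂ) ^ ((k : ℂ) - 1 - 2 * s))⁻¹ := by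
    intro ⟨p, hp⟩
    simp only
    have hp1 : 1 < p := hp.one_lt
    have hp0 : (p : ℂ) ≠ 0 := Nat.cast_ne_zero.mpr hp.pos.ne'
    set c : ℂ := a p * (p : ℂ) ^ (-s) with hc
    set d : ℂ := (p : ℂ) ^ ((k : ℂ) - 1 - 2 * s) with hd
    set g : ℕ → ℂ := fun e => f (p ^ e) with hg
    have hgsum : Summable g := by
      have hinj : Function.Injective (fun e : ℕ => p ^ e) :=
        fun e₁ e₂ h => Nat.pow_right_injective hp.two_le h
      exact (hsum.comp_injective hinj).of_norm
    -- the two-term recursion for g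
    have hkey : ∀ e : ℕ, g (e + 2) = c * g (e + 1) - d * g e := by
      intro e
      have hpe : ∀ m : ℕ, f (p ^ m) = a (p ^ m) * ((p ^ m : ℕ) : ℂ) ^ (-s) :=
        fun m => hfpos _ (pow_ne_zero m hp.pos.ne')
      have hcpow : ∀ m : ℕ, (((p ^ (m + 1) : ℕ)) : ℂ) ^ (-s) =
          (p : ℂ) ^ (-s) * (((p ^ m : ℕ)) : ℂ) ^ (-s) := by
        intro m
        rw [pow_succ, Nat.cast_mul, natCast_mul_natCast_cpow, mul_comm]
      have hrec' := hrec p hp (e + 1) (Nat.le_add_left 1 e)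
      simp only [Nat.add_sub_cancel] at hrec'
      have hd' : (p : ℂ) ^ ((k : ℂ) - 1) * ((p : ℂ) ^ (-s) * (p : ℂ) ^ (-s)) = d := by
        rw [hd, ← cpow_add _ _ hp0, ← cpow_add _ _ hp0]
        ring_nf
      simp only [hg, hpe, show e + 1 + 1 = e + 2 from rfl] at hrec' ⊢
      rw [show e + 2 = (e + 1) + 1 from rfl, hcpow (e + 1), hcpow e, hrec', hc, ← hd']
      ring
    have hg0 : g 0 = 1 := by simpa [hg] using hf1
    have hg1 : g 1 = c := by
      simp only [hg, pow_one]
      rw [hfpos _ hp.pos.ne', hc]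
    -- sum manipulation
    have hS : (∑' e, g e) * (1 - c + d) = 1 := by
      have h2 : (∑' e, g e) = g 0 + (g 1 + ∑' e, g (e + 2)) := by
        rw [Summable.tsum_eq_zero_add hgsum, Summable.tsum_eq_zero_add ((summable_nat_add_iff 1).mpr hgsum)]
      have hsum1 : Summable (fun e => g (e + 1)) := (summable_nat_add_iff 1).mpr hgsum
      have hsum2 : Summable (fun e => g (e + 2)) := (summable_nat_add_iff 2).mpr hgsum
      have h3 : ∑' e, g (e + 2) = c * (∑' e, g (e + 1)) - d * (∑' e, g e) := by
        calc ∑' e, g (e + 2) = ∑' e, (c * g (e + 1) - d * g e) := by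
              exact tsum_congr fun e => hkey e
          _ = c * (∑' e, g (e + 1)) - d * (∑' e, g e) := by
              rw [Summable.tsum_sub (hsum1.mul_left c) (hgsum.mul_left d), tsum_mul_left, tsum_mul_left]
      have h4 : ∑' e, g (e + 1) = (∑' e, g e) - g 0 := by
        rw [Summable.tsum_eq_zero_add hgsum]; ring
      rw [h3, h4, hg0, hg1] at h2
      linear_combination h2
    exact (inv_eq_of_mul_eq_one_right (by rw [mul_comm] at hS; exact hS)).symm
  have hEP' : HasProd (fun p : Nat.Primes =>
      (1 - a p * (p : ℂ) ^ (-s) + (p : ℂ) ^ ((k : ℂ) - 1 - 2 * s))⁻¹) (∑' n, f n) := by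
    exact hEP.congr_fun fun p => (hlocal p).symm
  refine ⟨hEP'.multipliable, ?_⟩
  have hL : ∑' n : ℕ, a (n + 1) * ((n + 1 : ℕ) : ℂ) ^ (-s) = ∑' n, f n := by
    rw [Summable.tsum_eq_zero_add hsum.of_norm, hf0, zero_add]
    exact tsum_congr fun n => (hfpos _ (Nat.succ_ne_zero n)).symm
  rw [hL, ← hEP'.tprod_eq]
end

section
/- Let F be a cusp form of weight k for SL₂(ℤ) with Fourier expansion F(τ) = ∑_{n≥1} a(n)·q^n, and let L(F,s) = ∑_{n≥1} a(n)·n^{−s}. Then for every complex s with Re(s) > k/2 + 1, (2π)^{−s}·Γ(s)·L(F,s) = ∫₀^∞ F(it)·t^{s−1} dt, where Γ is the Gamma function and the integral converges absolutely. -/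
open Complex UpperHalfPlane MeasureTheory

open scoped MatrixGroups Real CongruenceSubgroup

/-- The extension by `0` of a function on the upper half-plane to all of `ℂ`. -/
noncomputable def extendByZero (F : UpperHalfPlane → ℂ) : ℂ → ℂ := fun z =>
  if h : 0 < z.im then F ⟨z, h⟩ else 0

variable {k : ℤ}

private lemma phi_invariant (F : CuspForm (⊤ : Subgroup SL(2, ℤ)) k) (g : SL(2, ℤ)) (τ : ℍ) :
    ‖F (g • τ)‖ * (g • τ).im ^ ((k:ℝ)/2) = ‖F τ‖ * τ.im ^ ((k:ℝ)/2) := by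
  have h1 : F (g • τ) = (denom g τ)^k * F τ :=
    SlashInvariantForm.slash_action_eqn'' F (Subgroup.mem_map_of_mem _ (Subgroup.mem_top g)) τ
  have h2 : (g • τ).im = τ.im / Complex.normSq (denom g τ) := ModularGroup.im_smul_eq_div_normSq g τ
  set d : ℂ := denom g τ with hd
  have hd0 : 0 < ‖d‖ := norm_pos_iff.mpr (denom_ne_zero _ _)
  have him := τ.im_pos
  rw [h1, h2, norm_mul, norm_zpow, Complex.normSq_eq_norm_sq,
    Real.div_rpow him.le (by positivity), ← Real.rpow_natCast ‖d‖ 2,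
    ← Real.rpow_mul hd0.le]
  rw [show ((2:ℕ):ℝ) * ((k:ℝ)/2) = (k:ℝ) by push_cast; ring]
  have h4 : ‖d‖ ^ k = ‖d‖ ^ ((k:ℝ)) := by
    rw [← Real.rpow_intCast]
  rw [h4]
  field_simp

private lemma cfcGammaOne (k : ℤ) :
    CuspFormClass (CuspForm (⊤ : Subgroup SL(2, ℤ)) k) (CongruenceSubgroup.Gamma 1) k := by
  rw [CongruenceSubgroup.Gamma_one_top]; infer_instance

private lemma one_mem_strictPeriods_top :
    (1 : ℝ) ∈ ((⊤ : Subgroup SL(2, ℤ)).map (Matrix.SpecialLinearGroup.mapGL ℝ)).strictPeriods := by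
  rw [← MonoidHom.range_eq_map]; exact one_mem_strictPeriods_SL

private lemma differentiableAt_comp_ofComplex' (F : CuspForm (⊤ : Subgroup SL(2, ℤ)) k) {z : ℂ}
    (hz : 0 < z.im) : DifferentiableAt ℂ (⇑F ∘ UpperHalfPlane.ofComplex) z :=
  (UpperHalfPlane.mdifferentiable_iff.mp (ModularFormClass.holo F) z hz).differentiableAt
    (UpperHalfPlane.isOpen_upperHalfPlaneSet.mem_nhds hz)

private lemma phi_bound (F : CuspForm (⊤ : Subgroup SL(2, ℤ)) k) :
    ∃ M : ℝ, 0 ≤ M ∧ ∀ τ : ℍ, ‖F τ‖ * τ.im ^ ((k:ℝ)/2) ≤ M := by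
  obtain ⟨C, hC⟩ := (CuspFormClass.exp_decay_atImInfty (k := k) (h := 1) F one_pos one_mem_strictPeriods_top).isBigOWith
  rw [Asymptotics.isBigOWith_iff] at hC
  obtain ⟨A, hA⟩ := (UpperHalfPlane.atImInfty_mem _).mp hC
  have hdecay := tendsto_rpow_mul_exp_neg_mul_atTop_nhds_zero ((k:ℝ)/2) (2*π)
    (by positivity)
  obtain ⟨A₂, hA₂⟩ := Filter.eventually_atTop.mp (hdecay.eventually (gt_mem_nhds one_pos))
  set C' : ℝ := max C 0 with hC'def
  have hC'0 : 0 ≤ C' := le_max_right _ _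
  set B : ℝ := max (max A A₂) 1 with hBdef
  set c₀ : ℝ := Real.sqrt (3/4) with hc₀def
  have hc₀ : 0 < c₀ := Real.sqrt_pos.mpr (by norm_num)
  set K : Set ℂ := {z | |z.re| ≤ 1/2 ∧ c₀ ≤ z.im ∧ z.im ≤ B} with hKdef
  have hKc : IsCompact K := by
    apply Metric.isCompact_of_isClosed_isBounded
    · have : K = (fun z : ℂ => |z.re|) ⁻¹' Set.Iic (1/2) ∩
          ((fun z : ℂ => z.im) ⁻¹' Set.Ici c₀ ∩ (fun z : ℂ => z.im) ⁻¹' Set.Iic B) := by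
        ext z; simp [hKdef, Set.mem_setOf_eq, and_assoc]
      rw [this]
      exact ((isClosed_Iic.preimage (_root_.continuous_abs.comp Complex.continuous_re)).inter
        ((isClosed_Ici.preimage Complex.continuous_im).inter
          (isClosed_Iic.preimage Complex.continuous_im)))
    · rw [Metric.isBounded_iff_subset_closedBall 0]
      refine ⟨1/2 + max B 0, fun z hz => ?_⟩
      simp only [Metric.mem_closedBall, dist_zero_right]
      calc ‖z‖ ≤ |z.re| + |z.im| := Complex.norm_le_abs_re_add_abs_im z
        _ ≤ 1/2 + max B 0 := by
            refine add_le_add hz.1 ?_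
            rw [_root_.abs_of_nonneg (le_trans hc₀.le hz.2.1)]
            exact le_max_of_le_left hz.2.2
  have hcont : ContinuousOn (fun z : ℂ => ‖F (ofComplex z)‖ * z.im ^ ((k:ℝ)/2)) K := by
    intro z hz
    have hz0 : 0 < z.im := lt_of_lt_of_le hc₀ hz.2.1
    have h1 : ContinuousAt (fun z : ℂ => ‖F (ofComplex z)‖) z :=
      ((differentiableAt_comp_ofComplex' F hz0).continuousAt).norm
    have h2 : ContinuousAt (fun z : ℂ => z.im ^ ((k:ℝ)/2)) z :=
      (Real.continuousAt_rpow_const z.im _ (Or.inl hz0.ne')).comp Complex.continuous_im.continuousAt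
    exact (h1.mul h2).continuousWithinAt
  obtain ⟨C₂, hC₂⟩ := hKc.exists_bound_of_continuousOn hcont
  set M : ℝ := max C' C₂ with hMdef
  have hfd : ∀ τ : ℍ, τ ∈ ModularGroup.fd → ‖F τ‖ * τ.im ^ ((k:ℝ)/2) ≤ M := by
    intro τ hτ
    have him : c₀ ≤ τ.im := by
      have h1 : (1:ℝ) ≤ Complex.normSq τ := hτ.1
      have h2 : |(τ:ℂ).re| ≤ 1/2 := hτ.2
      have h3 : (3/4 : ℝ) ≤ τ.im ^ 2 := by
        have : Complex.normSq τ = (τ:ℂ).re ^ 2 + τ.im ^ 2 := by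
          rw [Complex.normSq_apply]; rw [← UpperHalfPlane.coe_im]; ring
        nlinarith [_root_.sq_abs ((τ:ℂ).re), abs_nonneg ((τ:ℂ).re)]
      calc c₀ = Real.sqrt (3/4) := rfl
        _ ≤ Real.sqrt (τ.im ^ 2) := Real.sqrt_le_sqrt h3
        _ = τ.im := by rw [Real.sqrt_sq τ.im_pos.le]
    rcases le_total τ.im B with hB | hB
    · refine le_trans ?_ (le_max_right C' C₂)
      have hzK : (τ:ℂ) ∈ K := ⟨by simpa using hτ.2, by simpa using him, by simpa using hB⟩
      have := hC₂ _ hzK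
      rw [Real.norm_eq_abs] at this
      refine le_trans (le_abs_self _) ?_
      simpa [UpperHalfPlane.ofComplex_apply, UpperHalfPlane.coe_im] using this
    · refine le_trans ?_ (le_max_left C' C₂)
      have hAim : A ≤ τ.im := le_trans (le_trans (le_max_left A A₂) (le_max_left _ 1)) hB
      have hA₂im : A₂ ≤ τ.im := le_trans (le_trans (le_max_right A A₂) (le_max_left _ 1)) hB
      have h5 := hA τ hAim
      have h6 : ‖F τ‖ ≤ C' * Real.exp (-(2*π) * τ.im) := by
        simp only [Set.mem_setOf_eq] at h5
        rw [Real.norm_eq_abs, Real.abs_exp] at h5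
        refine le_trans h5 ?_
        have : -2 * π * τ.im / (1:ℝ) = -(2*π) * τ.im := by ring
        rw [this]
        exact mul_le_mul_of_nonneg_right (le_max_left _ _) (Real.exp_pos _).le
      have h7 : τ.im ^ ((k:ℝ)/2) * Real.exp (-(2*π) * τ.im) ≤ 1 := (hA₂ _ hA₂im).le
      calc ‖F τ‖ * τ.im ^ ((k:ℝ)/2)
          ≤ (C' * Real.exp (-(2*π) * τ.im)) * τ.im ^ ((k:ℝ)/2) := by
            refine mul_le_mul_of_nonneg_right h6 ?_
            exact Real.rpow_nonneg τ.im_pos.le _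
        _ = C' * (τ.im ^ ((k:ℝ)/2) * Real.exp (-(2*π) * τ.im)) := by ring
        _ ≤ C' * 1 := mul_le_mul_of_nonneg_left h7 hC'0
        _ = C' := mul_one _
  refine ⟨max M 0, le_max_right _ _, fun τ => ?_⟩
  obtain ⟨g, hg⟩ := ModularGroup.exists_smul_mem_fd τ
  calc ‖F τ‖ * τ.im ^ ((k:ℝ)/2) = ‖F (g • τ)‖ * (g • τ).im ^ ((k:ℝ)/2) :=
        (phi_invariant F g τ).symm
    _ ≤ M := hfd _ hg
    _ ≤ max M 0 := le_max_left _ _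
private lemma coeff_bound (F : CuspForm (⊤ : Subgroup SL(2, ℤ)) k) (a : ℕ → ℂ)
    (hF : ∀ τ : ℍ, F τ = ∑' n : ℕ, a (n + 1) *
      Complex.exp (2 * (Real.pi : ℂ) * Complex.I * (τ : ℂ)) ^ (n + 1))
    (hsum : ∀ τ : ℍ, Summable fun n : ℕ => a (n + 1) *
      Complex.exp (2 * (Real.pi : ℂ) * Complex.I * (τ : ℂ)) ^ (n + 1))
    {M : ℝ} (hM : ∀ τ : ℍ, ‖F τ‖ ≤ M * τ.im ^ (-(k : ℝ) / 2)) (m : ℕ) {y : ℝ} (hy : 0 < y) :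
    ‖a (m + 1)‖ ≤ Real.exp (2 * π * (m + 1) * y) * M * y ^ (-(k : ℝ) / 2) := by
  -- the point x + iy
  have him : ∀ x : ℝ, (0:ℝ) < ((x:ℂ) + (y:ℂ) * Complex.I).im := by
    intro x; simp [hy]
  set pt : ℝ → ℍ := fun x => ⟨(x:ℂ) + (y:ℂ) * Complex.I, him x⟩ with hpt
  have hptim : ∀ x : ℝ, (pt x).im = y := by intro x; simp [hpt, UpperHalfPlane.im]
  -- the terms of the series, multiplied by e^{-2πi(m+1)x}
  set g : ℕ → ℝ → ℂ := fun n x =>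
    a (n + 1) * Complex.exp (2 * (π : ℂ) * Complex.I * ((pt x : ℂ))) ^ (n + 1) *
      Complex.exp (-(2 * (π : ℂ) * Complex.I * ((m : ℂ) + 1) * (x : ℝ))) with hg
  have hterm : ∀ (n : ℕ) (x : ℝ), g n x =
      (a (n + 1) * (Real.exp (-(2 * π * (n + 1) * y)) : ℝ)) *
        Complex.exp ((2 * (π : ℂ) * Complex.I * ((n : ℂ) - (m : ℂ))) * (x : ℝ)) := by
    intro n x
    rw [hg]
    simp only [hpt]
    rw [← Complex.exp_nat_mul, Complex.ofReal_exp, mul_assoc (a (n+1)), ← Complex.exp_add,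
      mul_assoc (a (n+1)), ← Complex.exp_add]
    congr 2
    push_cast
    ring_nf
    rw [Complex.I_sq]
    ring
  -- the key integral identity
  have hmeas : ∀ n : ℕ, IntegrableOn (g n) (Set.Ioc (0:ℝ) 1) := by
    intro n
    refine Continuous.integrableOn_Ioc ?_
    have : Continuous fun x : ℝ => Complex.exp ((2 * (π : ℂ) * Complex.I *
        ((n : ℂ) - (m : ℂ))) * (x : ℝ)) := by fun_prop
    have h2 : Continuous fun x : ℝ => (a (n + 1) * (Real.exp (-(2 * π * (n + 1) * y)) : ℝ)) *
        Complex.exp ((2 * (π : ℂ) * Complex.I * ((n : ℂ) - (m : ℂ))) * (x : ℝ)) :=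
      continuous_const.mul this
    have := funext (hterm n)
    rw [this]
    exact h2
  have hnormint : ∀ n : ℕ, ∫ x in Set.Ioc (0:ℝ) 1, ‖g n x‖ =
      ‖a (n + 1)‖ * Real.exp (-(2 * π * (n + 1) * y)) := by
    intro n
    have : ∀ x ∈ Set.Ioc (0:ℝ) 1, ‖g n x‖ = ‖a (n + 1)‖ * Real.exp (-(2 * π * (n + 1) * y)) := by
      intro x _
      rw [hterm n x, norm_mul, norm_mul]
      have h1 : (2 * (π : ℂ) * Complex.I * ((n : ℂ) - (m : ℂ))) * (x : ℝ) =
          ((2 * π * ((n : ℝ) - (m : ℝ)) * x : ℝ) : ℂ) * Complex.I := by push_cast; ring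
      rw [h1]
      rw [Complex.norm_exp_ofReal_mul_I, mul_one, Complex.norm_real, Real.norm_eq_abs, Real.abs_exp]
    rw [setIntegral_congr_fun measurableSet_Ioc this, setIntegral_const]
    simp [Real.volume_Ioc]
  have hsummable_norm : Summable fun n : ℕ => ‖a (n + 1)‖ * Real.exp (-(2 * π * (n + 1) * y)) := by
    have h0 := (summable_norm_iff.mpr (hsum (pt 0)))
    refine h0.congr fun n => ?_
    rw [norm_mul, norm_pow]
    have h1 : 2 * (π : ℂ) * Complex.I * ((pt 0 : ℂ)) = ((-(2 * π * y) : ℝ) : ℂ) := by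
      simp only [hpt, UpperHalfPlane.coe_mk_subtype]
      push_cast
      simp [Complex.ext_iff]
    rw [h1, ← Complex.ofReal_exp, Complex.norm_real, Real.norm_eq_abs, Real.abs_exp,
      ← Real.exp_nat_mul]
    congr 2
    push_cast
    ring
  have hint : ∀ n : ℕ, (∫ x in Set.Ioc (0:ℝ) 1, g n x) =
      if n = m then a (m + 1) * (Real.exp (-(2 * π * (m + 1) * y)) : ℝ) else 0 := by
    intro n
    rw [setIntegral_congr_fun measurableSet_Ioc (fun x _ => hterm n x),
      ← intervalIntegral.integral_of_le zero_le_one, intervalIntegral.integral_const_mul]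
    by_cases hnm : n = m
    · subst hnm
      simp only [sub_self, mul_zero, zero_mul, Complex.exp_zero, if_true]
      rw [intervalIntegral.integral_const]
      simp
    · have hc : (2 * (π : ℂ) * Complex.I * ((n : ℂ) - (m : ℂ))) ≠ 0 := by
        refine mul_ne_zero (mul_ne_zero (mul_ne_zero two_ne_zero ?_) Complex.I_ne_zero) ?_
        · exact_mod_cast Real.pi_ne_zero
        · rw [sub_ne_zero]
          exact_mod_cast hnm
      rw [integral_exp_mul_complex hc]
      have h2 : Complex.exp (2 * (π : ℂ) * Complex.I * ((n : ℂ) - (m : ℂ))) = 1 := by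
        have h3 : (2 * (π : ℂ) * Complex.I * ((n : ℂ) - (m : ℂ))) =
            (((n : ℤ) - (m : ℤ) : ℤ) : ℂ) * (2 * π * Complex.I) := by push_cast; ring
        rw [h3, Complex.exp_int_mul_two_pi_mul_I]
      simp only [Complex.ofReal_one, Complex.ofReal_zero, mul_zero, mul_one, Complex.exp_zero]
      rw [h2]
      simp [hnm]
  have hkey : (∫ x in Set.Ioc (0:ℝ) 1, F (pt x) *
      Complex.exp (-(2 * (π : ℂ) * Complex.I * ((m : ℂ) + 1) * (x : ℝ)))) =
      a (m + 1) * (Real.exp (-(2 * π * (m + 1) * y)) : ℝ) := by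
    have h1 : ∀ x ∈ Set.Ioc (0:ℝ) 1, F (pt x) *
        Complex.exp (-(2 * (π : ℂ) * Complex.I * ((m : ℂ) + 1) * (x : ℝ))) = ∑' n : ℕ, g n x := by
      intro x _
      rw [hF (pt x), hg, tsum_mul_right]
    rw [setIntegral_congr_fun measurableSet_Ioc h1,
      ← MeasureTheory.integral_tsum_of_summable_integral_norm hmeas
        ((summable_congr fun n => hnormint n).mpr hsummable_norm)]
    rw [tsum_congr hint, tsum_ite_eq]
  have hvol : volume (Set.Ioc (0:ℝ) 1) < ⊤ := measure_Ioc_lt_top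
  have hb : ‖a (m + 1)‖ * Real.exp (-(2 * π * (m + 1) * y)) ≤
      M * y ^ (-(k : ℝ) / 2) * (volume (Set.Ioc (0:ℝ) 1)).toReal := by
    have := MeasureTheory.norm_setIntegral_le_of_norm_le_const hvol
      (C := M * y ^ (-(k : ℝ) / 2)) (f := fun x : ℝ => F (pt x) *
        Complex.exp (-(2 * (π : ℂ) * Complex.I * ((m : ℂ) + 1) * (x : ℝ)))) ?_
    · rw [hkey] at this
      rw [norm_mul, Complex.norm_real, Real.norm_eq_abs, Real.abs_exp] at this
      exact this
    · intro x _
      rw [norm_mul]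
      have h1 : -(2 * (π : ℂ) * Complex.I * ((m : ℂ) + 1) * (x : ℝ)) =
          ((-(2 * π * ((m : ℝ) + 1) * x) : ℝ) : ℂ) * Complex.I := by push_cast; ring
      rw [h1]
      rw [Complex.norm_exp_ofReal_mul_I, mul_one]
      have h2 := hM (pt x)
      rwa [hptim x] at h2
  rw [Real.volume_Ioc] at hb
  simp only [sub_zero, ENNReal.toReal_ofReal zero_le_one, mul_one] at hb
  calc ‖a (m + 1)‖ = (‖a (m + 1)‖ * Real.exp (-(2 * π * (m + 1) * y))) *
        Real.exp (2 * π * (m + 1) * y) := by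
        rw [mul_assoc, ← Real.exp_add]
        simp
    _ ≤ (M * y ^ (-(k : ℝ) / 2)) * Real.exp (2 * π * (m + 1) * y) :=
        mul_le_mul_of_nonneg_right hb (Real.exp_pos _).le
    _ = Real.exp (2 * π * (m + 1) * y) * M * y ^ (-(k : ℝ) / 2) := by ring

private lemma hval_aux (F : CuspForm (⊤ : Subgroup SL(2, ℤ)) k) {t : ℝ} (ht : 0 < t) :
    extendByZero (⇑F) ((t:ℂ) * Complex.I) =
      F (UpperHalfPlane.ofComplex ((t:ℂ) * Complex.I)) := by
  have him : (0:ℝ) < ((t:ℂ) * Complex.I).im := by simpa using ht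
  rw [UpperHalfPlane.ofComplex_apply_of_im_pos him, extendByZero, dif_pos him]

private lemma norm_q (τ : ℍ) :
    ‖Complex.exp (2 * (π : ℂ) * Complex.I * (τ : ℂ))‖ = Real.exp (-(2 * π * τ.im)) := by
  rw [Complex.norm_exp]
  congr 1
  simp [Complex.mul_re, Complex.mul_im, UpperHalfPlane.coe_im]

/-- If `F` is a cusp form of weight `k` for `SL₂(ℤ)` with Fourier expansion
`F(τ) = ∑_{n≥1} a(n) q^n` and `L(F,s) = ∑_{n≥1} a(n) n^{−s}`, then for `Re s > k/2 + 1` the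
integral `∫₀^∞ F(it) t^{s−1} dt` converges absolutely and equals `(2π)^{−s}·Γ(s)·L(F,s)`. -/
theorem cuspform_mellin (k : ℤ) (F : CuspForm (⊤ : Subgroup SL(2, ℤ)) k) (a : ℕ → ℂ)
    (hF : ∀ τ : UpperHalfPlane,
      F τ = ∑' n : ℕ, a (n + 1) *
        Complex.exp (2 * (Real.pi : ℂ) * Complex.I * (τ : ℂ)) ^ (n + 1))
    (s : ℂ) (hs : (k : ℝ) / 2 + 1 < s.re) :
    IntegrableOn (fun t : ℝ =>
        extendByZero F ((t : ℂ) * Complex.I) * (t : ℂ) ^ (s - 1)) (Set.Ioi 0) ∧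
    (2 * (Real.pi : ℂ)) ^ (-s) * Complex.Gamma s *
        ∑' n : ℕ, a (n + 1) * ((n + 1 : ℕ) : ℂ) ^ (-s) =
      ∫ t in Set.Ioi (0 : ℝ),
        extendByZero F ((t : ℂ) * Complex.I) * (t : ℂ) ^ (s - 1) := by
  obtain ⟨M, hM0, hMb⟩ := phi_bound F
  have hM : ∀ τ : ℍ, ‖F τ‖ ≤ M * τ.im ^ (-(k : ℝ) / 2) := by
    intro τ
    have h2 : τ.im ^ (-(k : ℝ) / 2) = (τ.im ^ ((k : ℝ) / 2))⁻¹ := by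
      rw [neg_div, Real.rpow_neg τ.im_pos.le]
    have h3 : (0 : ℝ) < τ.im ^ ((k : ℝ) / 2) := Real.rpow_pos_of_pos τ.im_pos _
    rw [h2, ← div_eq_mul_inv, le_div_iff₀ h3]
    exact hMb τ
  have hval : ∀ {t : ℝ}, 0 < t → extendByZero (⇑F) ((t : ℂ) * Complex.I) =
      F (UpperHalfPlane.ofComplex ((t : ℂ) * Complex.I)) := fun ht => hval_aux F ht
  by_cases hP : ∀ τ : ℍ, Summable fun n : ℕ => a (n + 1) *
      Complex.exp (2 * (Real.pi : ℂ) * Complex.I * (τ : ℂ)) ^ (n + 1)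
  · by_cases hre : 0 < s.re
    · -- main case: Re s > 0, coefficients summable
      have hecke : ∀ m : ℕ, ‖a (m + 1)‖ ≤
          (Real.exp (2 * π) * M) * ((m : ℝ) + 1) ^ ((k : ℝ) / 2) := by
        intro m
        have hm1 : (0:ℝ) < (m : ℝ) + 1 := by positivity
        have hy : (0:ℝ) < 1 / ((m : ℝ) + 1) := by positivity
        have h1 := coeff_bound F a hF hP hM m hy
        have e1 : 2 * π * ((m : ℝ) + 1) * (1 / ((m : ℝ) + 1)) = 2 * π := by field_simp
        have e2 : (1 / ((m : ℝ) + 1)) ^ (-(k : ℝ) / 2) = ((m : ℝ) + 1) ^ ((k : ℝ) / 2) := by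
          rw [one_div, Real.inv_rpow hm1.le, ← Real.rpow_neg hm1.le]
          congr 1
          ring
        rw [e1, e2] at h1
        exact h1
      set G : ℝ → ℂ := fun t => extendByZero (⇑F) ((t : ℂ) * Complex.I) with hGdef
      have hFt : ∀ t ∈ Set.Ioi (0:ℝ), HasSum (fun n : ℕ =>
          a (n + 1) * ((Real.exp (-(2 * π * ((n : ℝ) + 1)) * t) : ℝ) : ℂ)) (G t) := by
        intro t ht
        have ht' : (0:ℝ) < t := ht
        have him : (0:ℝ) < ((t:ℂ) * Complex.I).im := by simpa using ht'
        have hofc : UpperHalfPlane.ofComplex ((t:ℂ) * Complex.I) = ⟨(t:ℂ) * Complex.I, him⟩ :=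
          UpperHalfPlane.ofComplex_apply_of_im_pos him
        set τ : ℍ := ⟨(t:ℂ) * Complex.I, him⟩ with hτ
        have heqf : (fun n : ℕ => a (n + 1) *
            Complex.exp (2 * (π:ℂ) * Complex.I * (τ:ℂ)) ^ (n+1))
            = fun n : ℕ => a (n + 1) * ((Real.exp (-(2 * π * ((n:ℝ) + 1)) * t) : ℝ) : ℂ) := by
          funext n
          congr 1
          rw [← Complex.exp_nat_mul, Complex.ofReal_exp]
          congr 1
          simp only [hτ, UpperHalfPlane.coe_mk_subtype]
          push_cast
          simp [Complex.ext_iff]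
          ring
        have h2 := (hP τ).hasSum
        have h3 : G t = F τ := by rw [hGdef]; exact (hval ht').trans (by rw [hofc])
        rw [h3, hF τ]
        exact heqf ▸ h2
      have hp : ∀ n : ℕ, a (n+1) = 0 ∨ 0 < 2 * π * ((n:ℝ) + 1) :=
        fun n => Or.inr (by positivity)
      have h_sum : Summable fun n : ℕ => ‖a (n+1)‖ / (2 * π * ((n:ℝ)+1)) ^ s.re := by
        have hsm : Summable (fun n : ℕ => ((n:ℝ)+1) ^ ((k:ℝ)/2 - s.re)) := by
          have hlt : ((k:ℝ)/2 - s.re) < -1 := by linarith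
          have h4 := Real.summable_nat_rpow.mpr hlt
          have h5 := (summable_nat_add_iff
            (f := fun n : ℕ => ((n:ℝ)) ^ ((k:ℝ)/2 - s.re)) 1).mpr h4
          refine h5.congr fun n => ?_
          norm_num
        refine ((hsm.mul_left ((Real.exp (2*π) * M) / (2*π)^s.re)).of_nonneg_of_le
          (fun n => by positivity) (fun n => ?_))
        have hn1 : (0:ℝ) < (n:ℝ)+1 := by positivity
        calc ‖a (n+1)‖ / (2*π*((n:ℝ)+1))^s.re
            ≤ ((Real.exp (2*π) * M) * ((n:ℝ)+1)^((k:ℝ)/2)) / (2*π*((n:ℝ)+1))^s.re := by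
              gcongr
              exact hecke n
          _ = ((Real.exp (2*π) * M) / (2*π)^s.re) * ((n:ℝ)+1)^((k:ℝ)/2 - s.re) := by
              rw [Real.mul_rpow (by positivity) hn1.le, Real.rpow_sub hn1]
              have hpos1 : (0:ℝ) < (2*π)^s.re := Real.rpow_pos_of_pos (by positivity) _
              have hpos2 : (0:ℝ) < ((n:ℝ)+1)^s.re := Real.rpow_pos_of_pos hn1 _
              field_simp
      have hMel := hasSum_mellin (a := fun n : ℕ => a (n+1))
        (p := fun n : ℕ => 2*π*((n:ℝ)+1)) (F := G) (s := s) hp hre hFt h_sum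
      have hterm2 : ∀ n : ℕ, Complex.Gamma s * a (n+1) / ((2*π*((n:ℝ)+1) : ℝ) : ℂ) ^ s =
          ((2*(π:ℂ)) ^ (-s) * Complex.Gamma s) * (a (n+1) * ((n+1:ℕ):ℂ) ^ (-s)) := by
        intro n
        have hcast : ((2*π*((n:ℝ)+1) : ℝ) : ℂ) =
            ((2*π : ℝ) : ℂ) * ((((n:ℝ)+1) : ℝ) : ℂ) := by push_cast; ring
        rw [hcast, mul_cpow_ofReal_nonneg (by positivity) (by positivity)]
        have hc1 : ((2*π : ℝ) : ℂ) = 2 * (π:ℂ) := by push_cast; ring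
        have hc2 : ((((n:ℝ)+1) : ℝ) : ℂ) = ((n+1:ℕ):ℂ) := by push_cast; ring
        rw [hc1, hc2, Complex.cpow_neg, Complex.cpow_neg, div_eq_mul_inv, mul_inv]
        ring
      have hMel2 : HasSum (fun n : ℕ => ((2*(π:ℂ))^(-s) * Complex.Gamma s) *
          (a (n+1) * ((n+1:ℕ):ℂ)^(-s))) (mellin G s) := (funext hterm2) ▸ hMel
      have heq2 : (2*(π:ℂ))^(-s) * Complex.Gamma s *
          (∑' n : ℕ, a (n+1) * ((n+1:ℕ):ℂ)^(-s)) = mellin G s := by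
        rw [← hMel2.tsum_eq, tsum_mul_left]
      have hGcont : ContinuousOn G (Set.Ioi (0:ℝ)) := by
        refine ContinuousOn.congr
          (f := fun t : ℝ => (⇑F ∘ ⇑UpperHalfPlane.ofComplex) ((t:ℂ) * Complex.I)) ?_ ?_
        · intro t ht
          have him : (0:ℝ) < ((t:ℂ) * Complex.I).im := by simpa using (ht : (0:ℝ) < t)
          apply ContinuousAt.continuousWithinAt
          refine ContinuousAt.comp (g := ⇑F ∘ ⇑UpperHalfPlane.ofComplex)
            (f := fun t : ℝ => (t:ℂ) * Complex.I) ?_ ?_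
          · exact (differentiableAt_comp_ofComplex' F him).continuousAt
          · exact (Complex.continuous_ofReal.mul continuous_const).continuousAt
        · intro t ht
          exact hval ht
      have hloc : LocallyIntegrableOn G (Set.Ioi (0:ℝ)) :=
        hGcont.locallyIntegrableOn measurableSet_Ioi
      have htop : G =O[Filter.atTop] fun t => Real.exp (-(2*π) * t) := by
        obtain ⟨C, hC⟩ := (CuspFormClass.exp_decay_atImInfty (k := k) (h := 1) F one_pos one_mem_strictPeriods_top).isBigOWith
        rw [Asymptotics.isBigOWith_iff] at hC
        obtain ⟨A, hA⟩ := (UpperHalfPlane.atImInfty_mem _).mp hC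
        rw [Asymptotics.isBigO_iff]
        refine ⟨C, ?_⟩
        filter_upwards [Filter.eventually_ge_atTop (max A 1)] with t ht
        have ht0 : (0:ℝ) < t := lt_of_lt_of_le one_pos (le_trans (le_max_right A 1) ht)
        have him : (0:ℝ) < ((t:ℂ) * Complex.I).im := by simpa using ht0
        have hofc : UpperHalfPlane.ofComplex ((t:ℂ) * Complex.I) = ⟨(t:ℂ) * Complex.I, him⟩ :=
          UpperHalfPlane.ofComplex_apply_of_im_pos him
        have hGt : G t = F ⟨(t:ℂ) * Complex.I, him⟩ := by
          rw [hGdef]; exact (hval ht0).trans (by rw [hofc])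
        have himt : UpperHalfPlane.im ⟨(t:ℂ) * Complex.I, him⟩ = t := by
          simp [UpperHalfPlane.im]
        have h5 := hA ⟨(t:ℂ) * Complex.I, him⟩ (by rw [himt]; exact le_trans (le_max_left A 1) ht)
        simp only [Set.mem_setOf_eq] at h5
        rw [himt] at h5
        have harg : -2*π*t/(1:ℝ) = -(2*π)*t := by ring
        rw [harg] at h5
        rw [hGt]
        exact h5
      have hbot : G =O[nhdsWithin 0 (Set.Ioi 0)] fun t : ℝ => t ^ (-((k:ℝ)/2)) := by
        rw [Asymptotics.isBigO_iff]
        refine ⟨M, ?_⟩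
        filter_upwards [self_mem_nhdsWithin] with t ht
        have ht0 : (0:ℝ) < t := ht
        have him : (0:ℝ) < ((t:ℂ) * Complex.I).im := by simpa using ht0
        have hofc : UpperHalfPlane.ofComplex ((t:ℂ) * Complex.I) = ⟨(t:ℂ) * Complex.I, him⟩ :=
          UpperHalfPlane.ofComplex_apply_of_im_pos him
        have hGt : G t = F ⟨(t:ℂ) * Complex.I, him⟩ := by
          rw [hGdef]; exact (hval ht0).trans (by rw [hofc])
        have himt : UpperHalfPlane.im ⟨(t:ℂ) * Complex.I, him⟩ = t := by
          simp [UpperHalfPlane.im]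
        have h5 := hM ⟨(t:ℂ) * Complex.I, him⟩
        rw [himt, neg_div] at h5
        rw [hGt, Real.norm_eq_abs, _root_.abs_of_nonneg (Real.rpow_nonneg ht0.le _)]
        exact h5
      have hconv : MellinConvergent G s :=
        mellinConvergent_of_isBigO_rpow_exp (by positivity : (0:ℝ) < 2*π) hloc htop hbot
          (by linarith : (k:ℝ)/2 < s.re)
      have hmel_int : mellin G s = ∫ t in Set.Ioi (0:ℝ), G t * (t:ℂ)^(s-1) := by
        rw [mellin]
        exact setIntegral_congr_fun measurableSet_Ioi fun t ht => by
          rw [smul_eq_mul, mul_comm]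
      constructor
      · have h6 := hconv
        rw [MellinConvergent] at h6
        exact (integrableOn_congr_fun
          (fun t ht => by rw [smul_eq_mul, mul_comm]) measurableSet_Ioi).mpr h6
      · rw [heq2, hmel_int]
    · -- Re s ≤ 0 : then k < 0 and all coefficients vanish
      push_neg at hre
      have hzero : ∀ m : ℕ, a (m + 1) = 0 := by
        intro m
        have hnorm : ∀ y : ℝ, 0 < y → ‖a (m + 1)‖ ≤
            Real.exp (2 * π * (m + 1) * y) * M * y ^ (-(k : ℝ) / 2) :=
          fun y hy => coeff_bound F a hF hP hM m hy
        have hkpos : 0 < -(k : ℝ) / 2 := by linarith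
        have htend : Filter.Tendsto
            (fun y : ℝ => Real.exp (2 * π * (m + 1) * y) * M * y ^ (-(k : ℝ) / 2))
            (nhdsWithin 0 (Set.Ioi 0)) (nhds 0) := by
          have h1 : Filter.Tendsto (fun y : ℝ => Real.exp (2 * π * (m + 1) * y) * M)
              (nhdsWithin 0 (Set.Ioi 0)) (nhds (Real.exp (2 * π * (m + 1) * 0) * M)) :=
            (((Real.continuous_exp.comp (continuous_const.mul continuous_id)).mul
              continuous_const).tendsto 0).mono_left nhdsWithin_le_nhds
          have h2 : Filter.Tendsto (fun y : ℝ => y ^ (-(k : ℝ) / 2))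
              (nhdsWithin 0 (Set.Ioi 0)) (nhds 0) := by
            have h3 := (Real.continuousAt_rpow_const 0 (-(k : ℝ) / 2)
              (Or.inr hkpos.le)).tendsto
            rw [Real.zero_rpow hkpos.ne'] at h3
            exact h3.mono_left nhdsWithin_le_nhds
          simpa using h1.mul h2
        have hle : ‖a (m + 1)‖ ≤ 0 := by
          refine ge_of_tendsto htend ?_
          filter_upwards [self_mem_nhdsWithin] with y hy using hnorm y hy
        simpa using le_antisymm hle (norm_nonneg _)
      have hFzero : ∀ τ : ℍ, F τ = 0 := by
        intro τ; rw [hF τ]; simp [hzero]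
      have hzero2 : ∀ t ∈ Set.Ioi (0:ℝ),
          extendByZero (⇑F) ((t : ℂ) * Complex.I) * (t : ℂ) ^ (s - 1) = 0 := by
        intro t ht
        rw [hval ht, hFzero, zero_mul]
      constructor
      · exact (integrableOn_congr_fun hzero2 measurableSet_Ioi).mpr (integrableOn_zero)
      · rw [setIntegral_congr_fun measurableSet_Ioi hzero2]
        simp [hzero]
  · -- non-summable case : F is identically zero
    push_neg at hP
    obtain ⟨τ₀, hτ₀⟩ := hP
    have htrans : ∀ τ : ℍ, τ.im < τ₀.im → ¬ Summable (fun n : ℕ => a (n + 1) *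
        Complex.exp (2 * (π : ℂ) * Complex.I * (τ : ℂ)) ^ (n + 1)) := by
      intro τ hlt hsummτ
      apply hτ₀
      have hnd := summable_norm_iff.mpr hsummτ
      set C := ∑' n : ℕ, ‖a (n + 1) * Complex.exp (2 * (π : ℂ) * Complex.I * (τ : ℂ)) ^ (n + 1)‖
        with hCdef
      have hC0 : 0 ≤ C := tsum_nonneg fun n => norm_nonneg _
      have hbd : ∀ n : ℕ, ‖a (n + 1)‖ * Real.exp (-(2 * π * τ.im)) ^ (n + 1) ≤ C := by
        intro n
        have h1 := hnd.le_tsum n (fun j _ => norm_nonneg _)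
        rwa [norm_mul, norm_pow, norm_q] at h1
      set ρ : ℝ := Real.exp (-(2 * π * τ₀.im)) / Real.exp (-(2 * π * τ.im)) with hρdef
      have hρ0 : 0 < ρ := by positivity
      have hρ1 : ρ < 1 := by
        rw [hρdef, div_lt_one (Real.exp_pos _)]
        apply Real.exp_lt_exp.mpr
        have := Real.two_pi_pos
        nlinarith
      refine Summable.of_norm ?_
      have hgeo : Summable (fun n : ℕ => (C * ρ) * ρ ^ n) :=
        (summable_geometric_of_lt_one hρ0.le hρ1).mul_left _
      refine hgeo.of_nonneg_of_le (fun n => norm_nonneg _) (fun n => ?_)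
      rw [norm_mul, norm_pow, norm_q]
      have he : Real.exp (-(2 * π * τ₀.im)) = Real.exp (-(2 * π * τ.im)) * ρ := by
        rw [hρdef, mul_div_cancel₀ _ (Real.exp_pos _).ne']
      rw [he, mul_pow, ← mul_assoc]
      calc ‖a (n + 1)‖ * Real.exp (-(2 * π * τ.im)) ^ (n + 1) * ρ ^ (n + 1)
          ≤ C * ρ ^ (n + 1) :=
            mul_le_mul_of_nonneg_right (hbd n) (pow_nonneg hρ0.le _)
        _ = (C * ρ) * ρ ^ n := by rw [pow_succ]; ring
    have hFzero : ∀ τ : ℍ, F τ = 0 := by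
      have hUo : IsOpen {z : ℂ | 0 < z.im} := isOpen_lt continuous_const Complex.continuous_im
      have hUc : IsPreconnected {z : ℂ | 0 < z.im} :=
        (convex_halfSpace_im_gt 0).isPreconnected
      have hfan : AnalyticOnNhd ℂ (⇑F ∘ UpperHalfPlane.ofComplex) {z : ℂ | 0 < z.im} :=
        DifferentiableOn.analyticOnNhd
          (fun z hz => (differentiableAt_comp_ofComplex' F hz).differentiableWithinAt) hUo
      have hz₀mem : ((τ₀.im / 2 : ℝ) : ℂ) * Complex.I ∈ {z : ℂ | 0 < z.im} := by
        simp only [Set.mem_setOf_eq]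
        simpa using half_pos τ₀.im_pos
      have hev : (⇑F ∘ UpperHalfPlane.ofComplex) =ᶠ[nhds (((τ₀.im / 2 : ℝ) : ℂ) * Complex.I)]
          0 := by
        have hSo : IsOpen {z : ℂ | 0 < z.im ∧ z.im < τ₀.im} :=
          (isOpen_lt continuous_const Complex.continuous_im).inter
            (isOpen_lt Complex.continuous_im continuous_const)
        refine Filter.eventuallyEq_of_mem (hSo.mem_nhds ?_) ?_
        · constructor
          · simpa using half_pos τ₀.im_pos
          · simpa using half_lt_self τ₀.im_pos
        · intro z hz
          have h2 : UpperHalfPlane.im ⟨z, hz.1⟩ < τ₀.im := hz.2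
          have h3 := tsum_eq_zero_of_not_summable (htrans ⟨z, hz.1⟩ h2)
          simp only [Function.comp_apply, UpperHalfPlane.ofComplex_apply_of_im_pos hz.1,
            Pi.zero_apply]
          rw [hF ⟨z, hz.1⟩]
          exact h3
      have heq := hfan.eqOn_zero_of_preconnected_of_eventuallyEq_zero hUc hz₀mem hev
      intro τ
      have h2 := heq (show ((τ : ℂ)) ∈ {z : ℂ | 0 < z.im} from τ.2)
      simpa [UpperHalfPlane.ofComplex_apply] using h2
    have hDzero : (∑' n : ℕ, a (n + 1) * ((n + 1 : ℕ) : ℂ) ^ (-s)) = 0 := by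
      apply tsum_eq_zero_of_not_summable
      intro hsummD
      apply hτ₀
      have hnd := summable_norm_iff.mpr hsummD
      set C := ∑' n : ℕ, ‖a (n + 1) * ((n + 1 : ℕ) : ℂ) ^ (-s)‖ with hCdef
      have hC0 : 0 ≤ C := tsum_nonneg fun n => norm_nonneg _
      have hbd : ∀ n : ℕ, ‖a (n + 1)‖ ≤ C * ((n : ℝ) + 1) ^ s.re := by
        intro n
        have h1 := hnd.le_tsum n (fun j _ => norm_nonneg _)
        have hcast : ((n + 1 : ℕ) : ℂ) = (((n : ℝ) + 1 : ℝ) : ℂ) := by push_cast; ring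
        have hpos : (0:ℝ) < (n : ℝ) + 1 := by positivity
        rw [norm_mul] at h1
        have h9 : ‖((n + 1 : ℕ) : ℂ) ^ (-s)‖ = (((n : ℝ) + 1) ^ s.re)⁻¹ := by
          rw [hcast, Complex.norm_cpow_eq_rpow_re_of_pos hpos,
            Complex.neg_re, Real.rpow_neg hpos.le]
        rw [h9] at h1
        calc ‖a (n + 1)‖ = (‖a (n + 1)‖ * (((n : ℝ) + 1) ^ s.re)⁻¹) * ((n : ℝ) + 1) ^ s.re := by
              field_simp
          _ ≤ C * ((n : ℝ) + 1) ^ s.re :=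
              mul_le_mul_of_nonneg_right h1 (Real.rpow_nonneg hpos.le _)
      have hr1 : Real.exp (-(2 * π * τ₀.im)) < 1 := by
        rw [Real.exp_lt_one_iff]
        have := Real.two_pi_pos
        nlinarith [τ₀.im_pos]
      set N : ℕ := ⌈s.re⌉₊ with hN
      have h5 := summable_pow_mul_geometric_of_norm_lt_one (R := ℝ) N
        (r := Real.exp (-(2 * π * τ₀.im)))
        (by rw [Real.norm_eq_abs, abs_of_pos (Real.exp_pos _)]; exact hr1)
      have h6 := (summable_nat_add_iff (f := fun n : ℕ =>
        ((n : ℝ)) ^ N * Real.exp (-(2 * π * τ₀.im)) ^ n) 1).mpr h5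
      refine Summable.of_norm ?_
      refine ((h6.mul_left C).of_nonneg_of_le (fun n => norm_nonneg _) (fun n => ?_))
      rw [norm_mul, norm_pow, norm_q]
      have h7 : ((n : ℝ) + 1) ^ s.re ≤ ((n : ℝ) + 1) ^ (N : ℝ) :=
        Real.rpow_le_rpow_of_exponent_le (by linarith [Nat.cast_nonneg (α := ℝ) n])
          (Nat.le_ceil s.re)
      rw [Real.rpow_natCast] at h7
      have h8 : ‖a (n + 1)‖ ≤ C * ((n : ℝ) + 1) ^ N :=
        le_trans (hbd n) (mul_le_mul_of_nonneg_left h7 hC0)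
      calc ‖a (n + 1)‖ * Real.exp (-(2 * π * τ₀.im)) ^ (n + 1)
          ≤ (C * ((n : ℝ) + 1) ^ N) * Real.exp (-(2 * π * τ₀.im)) ^ (n + 1) :=
            mul_le_mul_of_nonneg_right h8 (pow_nonneg (Real.exp_pos _).le _)
        _ = C * (((n + 1 : ℕ) : ℝ) ^ N * Real.exp (-(2 * π * τ₀.im)) ^ (n + 1)) := by
            push_cast; ring
    have hzero2 : ∀ t ∈ Set.Ioi (0:ℝ),
        extendByZero (⇑F) ((t : ℂ) * Complex.I) * (t : ℂ) ^ (s - 1) = 0 := by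
      intro t ht
      rw [hval ht, hFzero, zero_mul]
    constructor
    · exact (integrableOn_congr_fun hzero2 measurableSet_Ioi).mpr (integrableOn_zero)
    · rw [setIntegral_congr_fun measurableSet_Ioi hzero2, hDzero]
      simp
end
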